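/- arXiv:1409.5970 — 4 statements merged into one kernel-verified Lean document; each statement's English description precedes it below -/
import Mathlib

section
/- Let a : ℝ → ℝ be continuous, nonnegative, and integrable, and 1 < α < 2. Then the functional I(q) = ½‖q‖_{H^1}² − ∫_ℝ a(t)|q|^α dt is coercive on H^1(ℝ, ℝ^n): I(q) → +∞ as ‖q‖_{H^1} → +∞. More precisely, I(q) ≥ ½‖q‖_{H^1}² − π^{α/2}(∫_ℝ a dt)·‖q‖_{H^1}^α. -/
open MeasureTheory Filter Real

open scoped RealInnerProductSpace


lemma sobolev_bound {n : ℕ} (q : ℝ → EuclideanSpace ℝ (Fin n)) (hq : Differentiable ℝ q)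
    (hg : Integrable (fun t => ‖q t‖ ^ 2 + ‖deriv q t‖ ^ 2)) (t : ℝ) :
    ‖q t‖ ^ 2 ≤ ∫ s : ℝ, (‖q s‖ ^ 2 + ‖deriv q s‖ ^ 2) := by
  set g : ℝ → ℝ := fun s => ‖q s‖ ^ 2 + ‖deriv q s‖ ^ 2 with hgdef
  have hg0 : ∀ s, 0 ≤ g s := fun s => add_nonneg (sq_nonneg _) (sq_nonneg _)
  set F : ℝ → ℝ := fun s => ‖q s‖ ^ 2 with hFdef
  set F' : ℝ → ℝ := fun s => (inner ℝ (q s) (deriv q s) : ℝ) + (inner ℝ (deriv q s) (q s) : ℝ) with hF'def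
  have hderiv : ∀ s, HasDerivAt F (F' s) s := by
    intro s
    have h1 : HasDerivAt q (deriv q s) s := (hq s).hasDerivAt
    have := h1.inner ℝ h1
    have heq : (fun u => (inner ℝ (q u) (q u) : ℝ)) = F := by
      funext u; exact real_inner_self_eq_norm_sq (q u)
    rw [heq] at this
    exact this
  have hF'bound : ∀ s, ‖F' s‖ ≤ g s := by
    intro s
    have h1 := abs_real_inner_le_norm (q s) (deriv q s)
    have h2 := abs_real_inner_le_norm (deriv q s) (q s)
    have h3 : 2 * ‖q s‖ * ‖deriv q s‖ ≤ ‖q s‖ ^ 2 + ‖deriv q s‖ ^ 2 := two_mul_le_add_sq _ _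
    simp only [Real.norm_eq_abs, hF'def]
    calc |(inner ℝ (q s) (deriv q s) : ℝ) + (inner ℝ (deriv q s) (q s) : ℝ)| ≤ |(inner ℝ (q s) (deriv q s) : ℝ)| + |(inner ℝ (deriv q s) (q s) : ℝ)| := abs_add_le _ _
      _ ≤ ‖q s‖ * ‖deriv q s‖ + ‖deriv q s‖ * ‖q s‖ := add_le_add h1 h2
      _ ≤ g s := by simp only [hgdef]; nlinarith
  have hmeasq : Measurable q := hq.continuous.measurable
  have hmeasd : Measurable (deriv q) := measurable_deriv q
  have hF'meas : Measurable F' := (hmeasq.inner hmeasd).add (hmeasd.inner hmeasq)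
  have hF'int : Integrable F' := hg.mono' hF'meas.aestronglyMeasurable (ae_of_all _ hF'bound)
  have hFint : Integrable F := hg.mono'
    (hq.continuous.norm.pow 2).aestronglyMeasurable
    (ae_of_all _ fun s => by
      simp only [hFdef, Real.norm_eq_abs, abs_of_nonneg (sq_nonneg ‖q s‖)]
      exact le_add_of_nonneg_right (sq_nonneg _))
  -- F t ≤ F s + ∫ g for all s ≤ t
  have hkey : ∀ s, s ≤ t → F t ≤ F s + ∫ u : ℝ, g u := by
    intro s hst
    have heq : ∫ u in s..t, F' u = F t - F s :=
      intervalIntegral.integral_eq_sub_of_hasDerivAt (fun u _ => hderiv u)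
        (hF'int.intervalIntegrable)
    have hle1 : ∫ u in s..t, F' u ≤ ∫ u in s..t, g u :=
      intervalIntegral.integral_mono_on hst (hF'int.intervalIntegrable)
        (hg.intervalIntegrable)
        (fun u _ => (le_abs_self _).trans (by simpa [Real.norm_eq_abs] using hF'bound u))
    have hle2 : ∫ u in s..t, g u ≤ ∫ u : ℝ, g u := by
      rw [intervalIntegral.integral_of_le hst]
      exact setIntegral_le_integral hg (ae_of_all _ hg0)
    linarith
  -- for every ε > 0 there is s ≤ t with F s < ε
  have hsmall : ∀ ε : ℝ, 0 < ε → ∃ s, s ≤ t ∧ F s < ε := by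
    intro ε hε
    by_contra h
    push_neg at h
    have hconst : Integrable (fun _ : ℝ => ε) (volume.restrict (Set.Iic t)) := by
      refine (hFint.restrict (s := Set.Iic t)).mono' aestronglyMeasurable_const ?_
      rw [ae_restrict_iff' measurableSet_Iic]
      exact ae_of_all _ fun s hs => by
        simp only [Real.norm_eq_abs, abs_of_pos hε]
        exact h s hs
    rw [integrable_const_iff] at hconst
    rcases hconst with h0 | hfin
    · exact hε.ne' h0
    · have hfin' := hfin.measure_univ_lt_top
      simp [Real.volume_Iic] at hfin'
  have : ∀ ε : ℝ, 0 < ε → F t ≤ (∫ u : ℝ, g u) + ε := by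
    intro ε hε
    obtain ⟨s, hst, hsε⟩ := hsmall ε hε
    have := hkey s hst
    linarith
  exact le_of_forall_pos_le_add this

lemma main_bound {n : ℕ} (a : ℝ → ℝ) (α : ℝ) (ha_nonneg : ∀ t, 0 ≤ a t)
    (ha_int : Integrable a) (hα0 : 0 ≤ α)
    (q : ℝ → EuclideanSpace ℝ (Fin n)) (hq : Differentiable ℝ q)
    (hgint : Integrable (fun t => ‖q t‖ ^ 2 + ‖deriv q t‖ ^ 2))
    (haint : Integrable (fun t => a t * ‖q t‖ ^ α)) :
    (∫ t : ℝ, a t * ‖q t‖ ^ α)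
      ≤ π ^ (α / 2) * (∫ t : ℝ, a t) *
        ((∫ t : ℝ, (‖q t‖ ^ 2 + ‖deriv q t‖ ^ 2)) ^ ((1:ℝ)/2)) ^ α := by
  set S := ∫ t : ℝ, (‖q t‖ ^ 2 + ‖deriv q t‖ ^ 2) with hS
  set X := S ^ ((1:ℝ)/2) with hX
  have hS0 : 0 ≤ S := integral_nonneg fun t => add_nonneg (sq_nonneg _) (sq_nonneg _)
  have hX0 : 0 ≤ X := Real.rpow_nonneg hS0 _
  have hX2 : X ^ 2 = S := by
    rw [hX, ← Real.rpow_natCast (S ^ ((1:ℝ)/2)) 2, ← Real.rpow_mul hS0]; norm_num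
  have hqle : ∀ t, ‖q t‖ ≤ X := by
    intro t
    refine le_of_pow_le_pow_left₀ two_ne_zero hX0 ?_
    rw [hX2]
    exact sobolev_bound q hq hgint t
  have hπ : (1:ℝ) ≤ π ^ (α/2) := by
    calc (1:ℝ) = π ^ (0:ℝ) := (Real.rpow_zero π).symm
    _ ≤ π ^ (α/2) := Real.rpow_le_rpow_of_exponent_le
        (by linarith [Real.pi_gt_three]) (by linarith)
  have hpt : ∀ t, a t * ‖q t‖ ^ α ≤ a t * (π ^ (α/2) * X ^ α) := by
    intro t
    refine mul_le_mul_of_nonneg_left ?_ (ha_nonneg t)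
    calc ‖q t‖ ^ α ≤ X ^ α := Real.rpow_le_rpow (norm_nonneg _) (hqle t) hα0
    _ ≤ π ^ (α/2) * X ^ α := le_mul_of_one_le_left (Real.rpow_nonneg hX0 _) hπ
  calc (∫ t : ℝ, a t * ‖q t‖ ^ α) ≤ ∫ t : ℝ, a t * (π ^ (α/2) * X ^ α) :=
        integral_mono haint (ha_int.mul_const _) hpt
  _ = π ^ (α/2) * (∫ t : ℝ, a t) * X ^ α := by rw [integral_mul_const]; ring

/-- coercivity of `I` on `H¹(ℝ,ℝⁿ)` together with the precise lower bound
`I(q) ≥ ½‖q‖² − π^{α/2}(∫a)‖q‖^α`, where `‖q‖ = (∫(‖q‖²+‖q'‖²))^{1/2}`. -/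
theorem stmt_4 (n : ℕ) (a : ℝ → ℝ) (α : ℝ)
    (ha_cont : Continuous a) (ha_nonneg : ∀ t, 0 ≤ a t) (ha_int : Integrable a)
    (hα1 : 1 < α) (hα2 : α < 2) :
    (∀ q : ℝ → EuclideanSpace ℝ (Fin n), Differentiable ℝ q →
      Integrable (fun t => ‖q t‖ ^ 2 + ‖deriv q t‖ ^ 2) →
      Integrable (fun t => a t * ‖q t‖ ^ α) →
      ((1 : ℝ) / 2) * (∫ t : ℝ, (‖q t‖ ^ 2 + ‖deriv q t‖ ^ 2))
          - (∫ t : ℝ, a t * ‖q t‖ ^ α)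
        ≥ ((1 : ℝ) / 2) * ((∫ t : ℝ, (‖q t‖ ^ 2 + ‖deriv q t‖ ^ 2)) ^ ((1:ℝ)/2)) ^ 2
          - π ^ (α / 2) * (∫ t : ℝ, a t) *
            ((∫ t : ℝ, (‖q t‖ ^ 2 + ‖deriv q t‖ ^ 2)) ^ ((1:ℝ)/2)) ^ α) ∧
    (∀ M : ℝ, ∃ R : ℝ, ∀ q : ℝ → EuclideanSpace ℝ (Fin n), Differentiable ℝ q →
      Integrable (fun t => ‖q t‖ ^ 2 + ‖deriv q t‖ ^ 2) →
      Integrable (fun t => a t * ‖q t‖ ^ α) →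
      R < (∫ t : ℝ, (‖q t‖ ^ 2 + ‖deriv q t‖ ^ 2)) ^ ((1:ℝ)/2) →
      M < ((1 : ℝ) / 2) * (∫ t : ℝ, (‖q t‖ ^ 2 + ‖deriv q t‖ ^ 2))
          - (∫ t : ℝ, a t * ‖q t‖ ^ α)) := by
  have hα0 : (0:ℝ) ≤ α := by linarith
  constructor
  · intro q hq hgint haint
    have hb := main_bound a α ha_nonneg ha_int hα0 q hq hgint haint
    have hS0 : 0 ≤ ∫ t : ℝ, (‖q t‖ ^ 2 + ‖deriv q t‖ ^ 2) :=
      integral_nonneg fun t => add_nonneg (sq_nonneg _) (sq_nonneg _)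
    have hX2 : ((∫ t : ℝ, (‖q t‖ ^ 2 + ‖deriv q t‖ ^ 2)) ^ ((1:ℝ)/2)) ^ 2
        = ∫ t : ℝ, (‖q t‖ ^ 2 + ‖deriv q t‖ ^ 2) := by
      rw [← Real.rpow_natCast ((∫ t : ℝ, (‖q t‖ ^ 2 + ‖deriv q t‖ ^ 2)) ^ ((1:ℝ)/2)) 2,
        ← Real.rpow_mul hS0]; norm_num
    rw [ge_iff_le, hX2]
    linarith
  · intro M
    set C := π ^ (α / 2) * (∫ t : ℝ, a t) with hC
    have hC0 : 0 ≤ C :=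
      mul_nonneg (Real.rpow_nonneg Real.pi_nonneg _) (integral_nonneg ha_nonneg)
    refine ⟨1 + (4*C) ^ (1/(2-α)) + Real.sqrt (4*|M|+4), ?_⟩
    intro q hq hgint haint hR
    have hb := main_bound a α ha_nonneg ha_int hα0 q hq hgint haint
    set S := ∫ t : ℝ, (‖q t‖ ^ 2 + ‖deriv q t‖ ^ 2) with hS
    set X := S ^ ((1:ℝ)/2) with hX
    have hS0 : 0 ≤ S := integral_nonneg fun t => add_nonneg (sq_nonneg _) (sq_nonneg _)
    have hX0 : 0 ≤ X := Real.rpow_nonneg hS0 _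
    have hX2 : X ^ 2 = S := by
      rw [hX, ← Real.rpow_natCast (S ^ ((1:ℝ)/2)) 2, ← Real.rpow_mul hS0]; norm_num
    have h4C0 : (0:ℝ) ≤ (4*C) ^ (1/(2-α)) := Real.rpow_nonneg (by linarith) _
    have hsq0 : (0:ℝ) ≤ Real.sqrt (4*|M|+4) := Real.sqrt_nonneg _
    have hX1 : (1:ℝ) ≤ X := by linarith
    have hXpos : (0:ℝ) < X := by linarith
    have h4C : 4*C ≤ X ^ ((2:ℝ)-α) := by
      have h1 : (4*C) ^ (1/(2-α)) ≤ X := by linarith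
      have h2 : ((4*C) ^ (1/(2-α))) ^ ((2:ℝ)-α) ≤ X ^ ((2:ℝ)-α) :=
        Real.rpow_le_rpow h4C0 h1 (by linarith)
      rwa [← Real.rpow_mul (by linarith : (0:ℝ) ≤ 4*C), one_div,
        inv_mul_cancel₀ (by intro h; apply absurd h; intro h'; linarith : (2:ℝ)-α ≠ 0),
        Real.rpow_one] at h2
    have hXα0 : 0 ≤ X ^ α := Real.rpow_nonneg hX0 _
    have hmul : X ^ ((2:ℝ)-α) * X ^ α = X ^ 2 := by
      rw [← Real.rpow_natCast X 2, ← Real.rpow_add hXpos]; norm_num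
    have hCX : 4 * (C * X ^ α) ≤ X ^ 2 := by
      calc 4*(C*X^α) = (4*C) * X^α := by ring
      _ ≤ X^((2:ℝ)-α) * X^α := mul_le_mul_of_nonneg_right h4C hXα0
      _ = X^2 := hmul
    have hM : 4*|M| + 4 < X ^ 2 := by
      have h1 : Real.sqrt (4*|M|+4) < X := by linarith
      have h2 := Real.sq_sqrt (show (0:ℝ) ≤ 4*|M|+4 by positivity)
      nlinarith
    rw [← hC] at hb
    linarith [le_abs_self M]
end

section
/- Let a ∈ L^1(ℝ) ∩ L^2(ℝ) be continuous and nonnegative and 1 < α < 2. Then the functional I₂(q) = ∫_ℝ a(t)|q(t)|^α dt is Fréchet differentiable on H^1(ℝ, ℝ^n) with derivative I₂'(q)v = α∫_ℝ a(t)|q(t)|^{α−2}(q(t)·v(t)) dt, and q ↦ I₂'(q) is continuous (so I₂ ∈ C^1(H^1, ℝ)). -/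
open MeasureTheory Filter Real

/-- `q ∈ H¹(ℝ, ℝⁿ)` (differentiable representative with `‖q‖² + ‖q'‖²` integrable). -/
def IsH1 {n : ℕ} (q : ℝ → EuclideanSpace ℝ (Fin n)) : Prop :=
  Differentiable ℝ q ∧ Integrable (fun t => ‖q t‖ ^ 2 + ‖deriv q t‖ ^ 2)

/-- The `H¹` norm `(∫ (‖q‖² + ‖q'‖²))^{1/2}`. -/
noncomputable def H1norm {n : ℕ} (q : ℝ → EuclideanSpace ℝ (Fin n)) : ℝ :=
  (∫ t : ℝ, (‖q t‖ ^ 2 + ‖deriv q t‖ ^ 2)) ^ ((1 : ℝ) / 2)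

/-- The nonlinear part of the functional, `I₂(q) = ∫ a(t)‖q(t)‖^α`. -/
noncomputable def I2 {n : ℕ} (a : ℝ → ℝ) (α : ℝ)
    (q : ℝ → EuclideanSpace ℝ (Fin n)) : ℝ :=
  ∫ t : ℝ, a t * ‖q t‖ ^ α

/-- The candidate derivative, `I₂'(q)v = α ∫ a(t)‖q(t)‖^{α−2}(q(t)·v(t))`. -/
noncomputable def dI2 {n : ℕ} (a : ℝ → ℝ) (α : ℝ)
    (q v : ℝ → EuclideanSpace ℝ (Fin n)) : ℝ :=
  α * ∫ t : ℝ, a t * ‖q t‖ ^ (α - 2) * (inner ℝ (q t) (v t) : ℝ)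

set_option synthInstance.maxHeartbeats 1000000
set_option maxHeartbeats 1000000
set_option linter.unusedVariables false
open Topology

section Aux
variable {n : ℕ}
variable {n : ℕ}

lemma norm_nF {β : ℝ} (hβ : β ≠ 0) (x : EuclideanSpace ℝ (Fin n)) :
    ‖(‖x‖ ^ (β - 1)) • x‖ = ‖x‖ ^ β := by
  rw [norm_smul, Real.norm_eq_abs, abs_of_nonneg (Real.rpow_nonneg (norm_nonneg x) _)]
  have h := Real.rpow_add' (norm_nonneg x) (show (β - 1) + 1 ≠ 0 by simpa using hβ)
  rw [Real.rpow_one] at h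
  rw [show β - 1 + 1 = β by ring] at h
  exact h.symm

lemma holder_aux {β : ℝ} (hβ0 : 0 < β) (hβ1 : β < 1) (x y : EuclideanSpace ℝ (Fin n))
    (hxy : ‖y‖ ≤ ‖x‖) :
    ‖(‖x‖ ^ (β - 1)) • x - (‖y‖ ^ (β - 1)) • y‖ ≤ 4 * ‖x - y‖ ^ β := by
  rcases eq_or_ne x y with rfl | hne
  · simp [Real.zero_rpow hβ0.ne']
  have hd : 0 < ‖x - y‖ := by rwa [norm_pos_iff, sub_ne_zero]
  by_cases hcase : ‖x‖ ≤ 2 * ‖x - y‖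
  · calc ‖(‖x‖ ^ (β - 1)) • x - (‖y‖ ^ (β - 1)) • y‖
        ≤ ‖(‖x‖ ^ (β - 1)) • x‖ + ‖(‖y‖ ^ (β - 1)) • y‖ := norm_sub_le _ _
      _ = ‖x‖ ^ β + ‖y‖ ^ β := by rw [norm_nF hβ0.ne', norm_nF hβ0.ne']
      _ ≤ (2 * ‖x - y‖) ^ β + (2 * ‖x - y‖) ^ β :=
          add_le_add (Real.rpow_le_rpow (norm_nonneg x) hcase hβ0.le)
            (Real.rpow_le_rpow (norm_nonneg y) (hxy.trans hcase) hβ0.le)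
      _ = 2 * ((2:ℝ) ^ β * ‖x - y‖ ^ β) := by
          rw [Real.mul_rpow (by norm_num) hd.le]; ring
      _ ≤ 2 * (2 * ‖x - y‖ ^ β) := by
          have h2 : (2:ℝ) ^ β ≤ 2 ^ (1:ℝ) :=
            Real.rpow_le_rpow_of_exponent_le one_le_two hβ1.le
          rw [Real.rpow_one] at h2
          have := Real.rpow_nonneg hd.le β
          nlinarith
      _ = 4 * ‖x - y‖ ^ β := by ring
  · push_neg at hcase
    have hxpos : 0 < ‖x‖ := lt_trans (by positivity) hcase
    have hdx : ‖x‖ - ‖y‖ ≤ ‖x - y‖ := by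
      have := norm_sub_norm_le x y; linarith [le_abs_self (‖x‖ - ‖y‖)]
    have hrd : ‖x - y‖ ≤ ‖y‖ := by linarith
    have hrpos : 0 < ‖y‖ := lt_of_lt_of_le hd hrd
    have hdecomp : (‖x‖ ^ (β - 1)) • x - (‖y‖ ^ (β - 1)) • y
        = (‖x‖ ^ (β - 1)) • (x - y) + (‖x‖ ^ (β - 1) - ‖y‖ ^ (β - 1)) • y := by
      rw [smul_sub, sub_smul]; abel
    rw [hdecomp]
    have h1 : ‖(‖x‖ ^ (β - 1)) • (x - y)‖ ≤ ‖x - y‖ ^ β := by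
      rw [norm_smul, Real.norm_eq_abs, abs_of_nonneg (Real.rpow_nonneg (norm_nonneg x) _)]
      have hle : ‖x‖ ^ (β - 1) ≤ ‖x - y‖ ^ (β - 1) :=
        Real.rpow_le_rpow_of_nonpos hd (by linarith) (by linarith)
      calc ‖x‖ ^ (β - 1) * ‖x - y‖ ≤ ‖x - y‖ ^ (β - 1) * ‖x - y‖ := by
            exact mul_le_mul_of_nonneg_right hle hd.le
        _ = ‖x - y‖ ^ β := by
            have h := Real.rpow_add hd (β - 1) 1
            rw [Real.rpow_one] at h
            rw [show β - 1 + 1 = β by ring] at h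
            exact h.symm
    have hmvt : |‖x‖ ^ (β - 1) - ‖y‖ ^ (β - 1)| ≤ (1 - β) * ‖y‖ ^ (β - 2) * (‖x‖ - ‖y‖) := by
      have key : ∀ t ∈ Set.Icc ‖y‖ ‖x‖, HasDerivWithinAt (fun s : ℝ => s ^ (β - 1))
          ((β - 1) * t ^ (β - 1 - 1)) (Set.Icc ‖y‖ ‖x‖) t := fun t ht =>
        (Real.hasDerivAt_rpow_const
          (Or.inl (ne_of_gt (lt_of_lt_of_le hrpos ht.1)))).hasDerivWithinAt
      have bound : ∀ t ∈ Set.Icc ‖y‖ ‖x‖,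
          ‖(β - 1) * t ^ (β - 1 - 1)‖ ≤ (1 - β) * ‖y‖ ^ (β - 2) := by
        intro t ht
        have htpos : 0 < t := lt_of_lt_of_le hrpos ht.1
        rw [Real.norm_eq_abs, abs_mul, abs_of_nonpos (by linarith : β - 1 ≤ 0),
          abs_of_nonneg (Real.rpow_nonneg htpos.le _)]
        have : t ^ (β - 1 - 1) ≤ ‖y‖ ^ (β - 2) := by
          rw [show β - 1 - 1 = β - 2 by ring]
          exact Real.rpow_le_rpow_of_nonpos hrpos ht.1 (by linarith)
        nlinarith
      have := Convex.norm_image_sub_le_of_norm_hasDerivWithin_le key bound (convex_Icc _ _)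
        (Set.left_mem_Icc.mpr hxy) (Set.right_mem_Icc.mpr hxy)
      rw [Real.norm_eq_abs, Real.norm_eq_abs, abs_of_nonneg (by linarith : (0:ℝ) ≤ ‖x‖ - ‖y‖)]
        at this
      linarith
    have h2 : ‖(‖x‖ ^ (β - 1) - ‖y‖ ^ (β - 1)) • y‖ ≤ ‖x - y‖ ^ β := by
      rw [norm_smul, Real.norm_eq_abs]
      have e1 : ‖y‖ ^ (β - 2) * ‖y‖ = ‖y‖ ^ (β - 1) := by
        have h := Real.rpow_add hrpos (β - 2) 1
        rw [Real.rpow_one] at h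
        rw [show β - 2 + 1 = β - 1 by ring] at h
        exact h.symm
      have e2 : ‖y‖ ^ (β - 1) ≤ ‖x - y‖ ^ (β - 1) :=
        Real.rpow_le_rpow_of_nonpos hd hrd (by linarith)
      have e3 : ‖x - y‖ ^ (β - 1) * ‖x - y‖ = ‖x - y‖ ^ β := by
        have h := Real.rpow_add hd (β - 1) 1
        rw [Real.rpow_one] at h
        rw [show β - 1 + 1 = β by ring] at h
        exact h.symm
      calc |‖x‖ ^ (β - 1) - ‖y‖ ^ (β - 1)| * ‖y‖
          ≤ ((1 - β) * ‖y‖ ^ (β - 2) * (‖x‖ - ‖y‖)) * ‖y‖ := by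
            apply mul_le_mul_of_nonneg_right hmvt (norm_nonneg y)
        _ = (1 - β) * (‖y‖ ^ (β - 2) * ‖y‖) * (‖x‖ - ‖y‖) := by ring
        _ = (1 - β) * ‖y‖ ^ (β - 1) * (‖x‖ - ‖y‖) := by rw [e1]
        _ ≤ 1 * ‖x - y‖ ^ (β - 1) * ‖x - y‖ := by
            apply mul_le_mul ?_ hdx (by linarith) (by positivity)
            apply mul_le_mul (by linarith) e2 (Real.rpow_nonneg hrpos.le _) (by norm_num)
        _ = ‖x - y‖ ^ β := by rw [one_mul, e3]
    calc ‖(‖x‖ ^ (β - 1)) • (x - y) + (‖x‖ ^ (β - 1) - ‖y‖ ^ (β - 1)) • y‖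
        ≤ ‖(‖x‖ ^ (β - 1)) • (x - y)‖ + ‖(‖x‖ ^ (β - 1) - ‖y‖ ^ (β - 1)) • y‖ := norm_add_le _ _
      _ ≤ ‖x - y‖ ^ β + ‖x - y‖ ^ β := add_le_add h1 h2
      _ ≤ 4 * ‖x - y‖ ^ β := by nlinarith [Real.rpow_nonneg hd.le β]

lemma holder {β : ℝ} (hβ0 : 0 < β) (hβ1 : β < 1) (x y : EuclideanSpace ℝ (Fin n)) :
    ‖(‖x‖ ^ (β - 1)) • x - (‖y‖ ^ (β - 1)) • y‖ ≤ 4 * ‖x - y‖ ^ β := by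
  rcases le_total ‖y‖ ‖x‖ with h | h
  · exact holder_aux hβ0 hβ1 x y h
  · have := holder_aux hβ0 hβ1 y x h
    rwa [norm_sub_rev, norm_sub_rev y x] at this

lemma taylor {α : ℝ} (hα1 : 1 < α) (hα2 : α < 2) (x y : EuclideanSpace ℝ (Fin n)) :
    |‖x + y‖ ^ α - ‖x‖ ^ α - α * ‖x‖ ^ (α - 2) * (inner ℝ x y : ℝ)| ≤ 4 * α * ‖y‖ ^ α := by
  set φ : EuclideanSpace ℝ (Fin n) →L[ℝ] ℝ := (α * ‖x‖ ^ (α - 2)) • innerSL ℝ x with hφ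
  have hder : ∀ z ∈ Metric.closedBall x ‖y‖, HasFDerivWithinAt (fun z => ‖z‖ ^ α)
      ((α * ‖z‖ ^ (α - 2)) • innerSL ℝ z) (Metric.closedBall x ‖y‖) z :=
    fun z _ => (hasFDerivAt_norm_rpow z hα1).hasFDerivWithinAt
  have hbound : ∀ z ∈ Metric.closedBall x ‖y‖,
      ‖(α * ‖z‖ ^ (α - 2)) • innerSL ℝ z - φ‖ ≤ α * (4 * ‖y‖ ^ (α - 1)) := by
    intro z hz
    have heq : (α * ‖z‖ ^ (α - 2)) • innerSL ℝ z - φ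
        = innerSL ℝ (α • ((‖z‖ ^ (α - 2)) • z - (‖x‖ ^ (α - 2)) • x)) := by
      ext v
      simp only [hφ, ContinuousLinearMap.coe_sub', Pi.sub_apply,
        ContinuousLinearMap.coe_smul', Pi.smul_apply, innerSL_apply_apply, smul_eq_mul,
        inner_sub_left, real_inner_smul_left, inner_smul_left, RCLike.inner_apply,
        conj_trivial, map_sub]
      ring
    rw [heq, innerSL_apply_norm, norm_smul, Real.norm_eq_abs,
      abs_of_pos (by linarith : (0:ℝ) < α)]
    have h4 : ‖(‖z‖ ^ (α - 1 - 1)) • z - (‖x‖ ^ (α - 1 - 1)) • x‖ ≤ 4 * ‖z - x‖ ^ (α - 1) :=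
      holder (by linarith) (by linarith) z x
    rw [show α - 1 - 1 = α - 2 by ring] at h4
    have hzx : ‖z - x‖ ≤ ‖y‖ := by
      rw [Metric.mem_closedBall, dist_eq_norm] at hz; exact hz
    have : (4:ℝ) * ‖z - x‖ ^ (α - 1) ≤ 4 * ‖y‖ ^ (α - 1) := by
      have := Real.rpow_le_rpow (norm_nonneg _) hzx (by linarith : (0:ℝ) ≤ α - 1)
      linarith
    exact mul_le_mul_of_nonneg_left (h4.trans this) (by linarith)
  have key := Convex.norm_image_sub_le_of_norm_hasFDerivWithin_le' hder hbound
    (convex_closedBall _ _) (Metric.mem_closedBall_self (norm_nonneg y))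
    (by simp [Metric.mem_closedBall, dist_eq_norm] : x + y ∈ Metric.closedBall x ‖y‖)
  rw [add_sub_cancel_left] at key
  have hφy : φ y = α * ‖x‖ ^ (α - 2) * (inner ℝ x y : ℝ) := by
    simp [hφ, real_inner_smul_left]
  rw [hφy, Real.norm_eq_abs] at key
  have : α * (4 * ‖y‖ ^ (α - 1)) * ‖y‖ = 4 * α * ‖y‖ ^ α := by
    have h := Real.rpow_add' (norm_nonneg y) (show (α - 1) + 1 ≠ 0 by intro h; linarith)
    rw [Real.rpow_one] at h
    rw [show α - 1 + 1 = α by ring] at h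
    rw [h]; ring
  linarith [key]

lemma cont_nF {β : ℝ} (hβ0 : 0 < β) (hβ1 : β < 1) :
    Continuous (fun x : EuclideanSpace ℝ (Fin n) => (‖x‖ ^ (β - 1)) • x) := by
  rw [Metric.continuous_iff]
  intro x ε hε
  refine ⟨(ε / 4) ^ (1 / β), Real.rpow_pos_of_pos (by positivity) _, fun z hz => ?_⟩
  rw [dist_eq_norm] at hz ⊢
  calc ‖(‖z‖ ^ (β - 1)) • z - (‖x‖ ^ (β - 1)) • x‖ ≤ 4 * ‖z - x‖ ^ β := holder hβ0 hβ1 z x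
    _ < 4 * (((ε / 4) ^ (1 / β)) ^ β) := by
        have := Real.rpow_lt_rpow (norm_nonneg _) hz hβ0
        linarith
    _ = ε := by
        rw [← Real.rpow_mul (by positivity : (0:ℝ) ≤ ε / 4), one_div,
          inv_mul_cancel₀ hβ0.ne', Real.rpow_one]
        ring

lemma sq_integral_nonneg (q : ℝ → EuclideanSpace ℝ (Fin n)) :
    0 ≤ ∫ t : ℝ, (‖q t‖ ^ 2 + ‖deriv q t‖ ^ 2) :=
  integral_nonneg (fun t => by positivity)

lemma H1norm_nonneg (q : ℝ → EuclideanSpace ℝ (Fin n)) : 0 ≤ H1norm q :=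
  Real.rpow_nonneg (sq_integral_nonneg q) _

lemma isH1_sup {φ : ℝ → EuclideanSpace ℝ (Fin n)} (h : IsH1 φ) (t : ℝ) :
    ‖φ t‖ ≤ H1norm φ := by
  obtain ⟨hdiff, hint⟩ := h
  set g : ℝ → ℝ := fun s => ‖φ s‖ ^ 2 with hgdef
  set g' : ℝ → ℝ := fun s => (inner ℝ (φ s) (deriv φ s) : ℝ) + (inner ℝ (deriv φ s) (φ s) : ℝ)
    with hg'def
  have hder : ∀ s, HasDerivAt g (g' s) s := by
    intro s
    have h1 : HasDerivAt φ (deriv φ s) s := (hdiff s).hasDerivAt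
    have h2 := HasDerivAt.inner ℝ h1 h1
    have : (fun u => (inner ℝ (φ u) (φ u) : ℝ)) = g := by
      funext u; rw [real_inner_self_eq_norm_sq]
    rwa [this] at h2
  have hbound : ∀ s, |g' s| ≤ ‖φ s‖ ^ 2 + ‖deriv φ s‖ ^ 2 := by
    intro s
    have h1 : |(inner ℝ (φ s) (deriv φ s) : ℝ)| ≤ ‖φ s‖ * ‖deriv φ s‖ := abs_real_inner_le_norm _ _
    have h2 : |(inner ℝ (deriv φ s) (φ s) : ℝ)| ≤ ‖deriv φ s‖ * ‖φ s‖ := abs_real_inner_le_norm _ _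
    have := abs_add_le (inner ℝ (φ s) (deriv φ s) : ℝ) (inner ℝ (deriv φ s) (φ s) : ℝ)
    nlinarith [sq_nonneg (‖φ s‖ - ‖deriv φ s‖), norm_nonneg (φ s), norm_nonneg (deriv φ s)]
  have hφcont : Continuous φ := hdiff.continuous
  have hg'meas : AEStronglyMeasurable g' := by
    have hm : Measurable (deriv φ) := (stronglyMeasurable_deriv φ).measurable
    exact ((hφcont.measurable.inner hm).add (hm.inner hφcont.measurable)).aestronglyMeasurable
  have hg'int : Integrable g' :=
    hint.mono' hg'meas (Eventually.of_forall (fun s => by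
      rw [Real.norm_eq_abs]; exact hbound s))
  have hgint : Integrable g :=
    hint.mono' ((hφcont.norm.pow 2).aestronglyMeasurable)
      (Eventually.of_forall (fun s => by
        simp only [hgdef, Real.norm_eq_abs, abs_of_nonneg (by positivity : (0:ℝ) ≤ ‖φ s‖ ^ 2)]
        nlinarith [sq_nonneg ‖deriv φ s‖]))
  -- FTC on intervals
  have hftc : ∀ s : ℝ, ∫ u in s..t, g' u = g t - g s := by
    intro s
    exact intervalIntegral.integral_eq_sub_of_hasDerivAt (fun u _ => hder u)
      (hg'int.intervalIntegrable)
  -- tendsto at bot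
  have htend : Tendsto (fun s : ℝ => ∫ u in s..t, g' u) atBot (𝓝 (∫ u in Set.Iic t, g' u)) :=
    intervalIntegral_tendsto_integral_Iic t hg'int.integrableOn tendsto_id
  have hgtend : Tendsto g atBot (𝓝 (g t - ∫ u in Set.Iic t, g' u)) := by
    have h2 : Tendsto (fun s : ℝ => g t - ∫ u in s..t, g' u) atBot
        (𝓝 (g t - ∫ u in Set.Iic t, g' u)) := tendsto_const_nhds.sub htend
    refine h2.congr (fun s => ?_)
    rw [hftc s]; ring
  set L : ℝ := g t - ∫ u in Set.Iic t, g' u with hL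
  have hL0 : L ≤ 0 := by
    by_contra hpos
    push_neg at hpos
    have hev : ∀ᶠ s in atBot, L / 2 ≤ g s := by
      have := hgtend (Ioi_mem_nhds (by linarith : L / 2 < L))
      filter_upwards [this] with s hs
      exact le_of_lt hs
    obtain ⟨c, hc⟩ := eventually_atBot.mp hev
    have hsub : Set.Iic c ⊆ {s | L / 2 ≤ g s} := fun s hs => hc s hs
    have h1 := measure_mono (μ := volume) hsub
    rw [Real.volume_Iic] at h1
    exact absurd (lt_of_le_of_lt h1 (hgint.measure_ge_lt_top (by linarith))) (by simp)
  have hL0' : 0 ≤ L := ge_of_tendsto' hgtend (fun s => by positivity)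
  have hgt : g t = ∫ u in Set.Iic t, g' u := by
    have : L = 0 := le_antisymm hL0 hL0'
    rw [hL] at this; linarith
  have hfinal : g t ≤ ∫ u : ℝ, (‖φ u‖ ^ 2 + ‖deriv φ u‖ ^ 2) := by
    rw [hgt]
    calc ∫ u in Set.Iic t, g' u ≤ ∫ u in Set.Iic t, (‖φ u‖ ^ 2 + ‖deriv φ u‖ ^ 2) :=
          integral_mono hg'int.integrableOn hint.integrableOn
            (fun u => (le_abs_self _).trans (hbound u))
      _ ≤ ∫ u : ℝ, (‖φ u‖ ^ 2 + ‖deriv φ u‖ ^ 2) :=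
          setIntegral_le_integral hint (Eventually.of_forall (fun u => by positivity))
  have hkey : (‖φ t‖ ^ 2 : ℝ) ^ ((1:ℝ)/2) = ‖φ t‖ := by
    rw [← Real.rpow_natCast ‖φ t‖ 2, ← Real.rpow_mul (norm_nonneg _)]
    norm_num
  calc ‖φ t‖ = (‖φ t‖ ^ 2 : ℝ) ^ ((1:ℝ)/2) := hkey.symm
    _ ≤ (∫ u : ℝ, (‖φ u‖ ^ 2 + ‖deriv φ u‖ ^ 2)) ^ ((1:ℝ)/2) :=
        Real.rpow_le_rpow (by positivity) hfinal (by norm_num)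
    _ = H1norm φ := rfl

end Aux


/-- `I₂` is Fréchet differentiable on `H¹` with derivative `dI2`,
and the derivative depends continuously on `q` (so `I₂ ∈ C¹`). -/
theorem stmt_17 (n : ℕ) (a : ℝ → ℝ) (α : ℝ)
    (ha_cont : Continuous a) (ha_nonneg : ∀ t, 0 ≤ a t)
    (ha_L1 : Integrable a) (ha_L2 : Integrable (fun t => (a t) ^ 2))
    (hα1 : 1 < α) (hα2 : α < 2) :
    (∀ q : ℝ → EuclideanSpace ℝ (Fin n), IsH1 q →
      ∀ ε : ℝ, 0 < ε → ∃ δ : ℝ, 0 < δ ∧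
        ∀ φ : ℝ → EuclideanSpace ℝ (Fin n), IsH1 φ → H1norm φ ≤ δ →
          |I2 a α (fun t => q t + φ t) - I2 a α q - dI2 a α q φ|
            ≤ ε * H1norm φ) ∧
    (∀ q : ℝ → EuclideanSpace ℝ (Fin n), IsH1 q →
      ∀ ε : ℝ, 0 < ε → ∃ δ : ℝ, 0 < δ ∧
        ∀ q' : ℝ → EuclideanSpace ℝ (Fin n), IsH1 q' →
          H1norm (fun t => q' t - q t) ≤ δ →
          ∀ φ : ℝ → EuclideanSpace ℝ (Fin n), IsH1 φ → H1norm φ ≤ 1 →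
            |dI2 a α q' φ - dI2 a α q φ| ≤ ε) := by
  have hα0 : 0 < α := by linarith
  set A : ℝ := ∫ t : ℝ, a t with hA
  have hA0 : 0 ≤ A := integral_nonneg ha_nonneg
  have hδ : ∀ ε : ℝ, 0 < ε → ∃ δ : ℝ, 0 < δ ∧ 4 * α * δ ^ (α - 1) * (A + 1) = ε := by
    intro ε hε
    refine ⟨(ε / (4 * α * (A + 1))) ^ (1 / (α - 1)),
      Real.rpow_pos_of_pos (by positivity) _, ?_⟩
    rw [← Real.rpow_mul (by positivity), one_div,
      inv_mul_cancel₀ (by intro hc; linarith : α - 1 ≠ 0), Real.rpow_one]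
    field_simp
  have hdom : ∀ (h : ℝ → ℝ) (C : ℝ), AEStronglyMeasurable h volume →
      (∀ t, |h t| ≤ C * a t) → Integrable h := fun h C hm hb =>
    (ha_L1.const_mul C).mono' hm (Eventually.of_forall fun t => by
      rw [Real.norm_eq_abs]; exact hb t)
  have hβ0 : 0 < α - 1 := by linarith
  have hβ1 : α - 1 < 1 := by linarith
  have hFcont : Continuous (fun x : EuclideanSpace ℝ (Fin n) => (‖x‖ ^ (α - 2)) • x) := by
    have h := cont_nF (n := n) hβ0 hβ1
    rwa [show α - 1 - 1 = α - 2 by ring] at h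
  have hFnorm : ∀ x : EuclideanSpace ℝ (Fin n), ‖(‖x‖ ^ (α - 2)) • x‖ = ‖x‖ ^ (α - 1) := by
    intro x
    have h := norm_nF (n := n) (β := α - 1) (by intro hc; linarith) x
    rwa [show α - 1 - 1 = α - 2 by ring] at h
  have hFholder : ∀ x y : EuclideanSpace ℝ (Fin n),
      ‖(‖x‖ ^ (α - 2)) • x - (‖y‖ ^ (α - 2)) • y‖ ≤ 4 * ‖x - y‖ ^ (α - 1) := by
    intro x y
    have h := holder (n := n) hβ0 hβ1 x y
    rwa [show α - 1 - 1 = α - 2 by ring] at h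
  have hfeq : ∀ (x v : EuclideanSpace ℝ (Fin n)),
      ‖x‖ ^ (α - 2) * (inner ℝ x v : ℝ) = (inner ℝ ((‖x‖ ^ (α - 2)) • x) v : ℝ) :=
    fun x v => (real_inner_smul_left x v _).symm
  have hf1int : ∀ (w : ℝ → EuclideanSpace ℝ (Fin n)) (M : ℝ), Continuous w →
      (∀ t, ‖w t‖ ≤ M) → Integrable (fun t => a t * ‖w t‖ ^ α) := by
    intro w M hw hM
    apply hdom _ (M ^ α)
    · exact (ha_cont.mul (hw.norm.rpow_const (fun t => Or.inr hα0.le))).aestronglyMeasurable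
    · intro t
      rw [abs_mul, abs_of_nonneg (ha_nonneg t),
        abs_of_nonneg (Real.rpow_nonneg (norm_nonneg _) _)]
      have h := Real.rpow_le_rpow (norm_nonneg (w t)) (hM t) hα0.le
      calc a t * ‖w t‖ ^ α ≤ a t * M ^ α := mul_le_mul_of_nonneg_left h (ha_nonneg t)
        _ = M ^ α * a t := by ring
  have hf3int : ∀ (u v : ℝ → EuclideanSpace ℝ (Fin n)), IsH1 u → IsH1 v →
      Integrable (fun t => a t * ‖u t‖ ^ (α - 2) * (inner ℝ (u t) (v t) : ℝ)) := by
    intro u v hu hv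
    have heq : (fun t => a t * ‖u t‖ ^ (α - 2) * (inner ℝ (u t) (v t) : ℝ))
        = fun t => a t * (inner ℝ ((‖u t‖ ^ (α - 2)) • u t) (v t) : ℝ) := by
      funext t; rw [mul_assoc, hfeq]
    rw [heq]
    apply hdom _ ((H1norm u) ^ (α - 1) * H1norm v)
    · exact (ha_cont.mul
        ((hFcont.comp hu.1.continuous).inner hv.1.continuous)).aestronglyMeasurable
    · intro t
      rw [abs_mul, abs_of_nonneg (ha_nonneg t)]
      have h1 : |(inner ℝ ((‖u t‖ ^ (α - 2)) • u t) (v t) : ℝ)| ≤ ‖u t‖ ^ (α - 1) * ‖v t‖ := by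
        refine (abs_real_inner_le_norm _ _).trans ?_
        rw [hFnorm]
      have h2 : ‖u t‖ ^ (α - 1) ≤ (H1norm u) ^ (α - 1) :=
        Real.rpow_le_rpow (norm_nonneg _) (isH1_sup hu t) (by linarith)
      have h3 : ‖v t‖ ≤ H1norm v := isH1_sup hv t
      calc a t * |(inner ℝ ((‖u t‖ ^ (α - 2)) • u t) (v t) : ℝ)|
          ≤ a t * ((H1norm u) ^ (α - 1) * H1norm v) := by
            refine mul_le_mul_of_nonneg_left (h1.trans ?_) (ha_nonneg t)
            exact mul_le_mul h2 h3 (norm_nonneg _)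
              (Real.rpow_nonneg (H1norm_nonneg u) _)
        _ = (H1norm u) ^ (α - 1) * H1norm v * a t := by ring
  constructor
  · -- Fréchet differentiability
    intro q hq ε hε
    obtain ⟨δ, hδpos, hδeq⟩ := hδ ε hε
    refine ⟨δ, hδpos, ?_⟩
    intro φ hφ hφδ
    have hH0 : 0 ≤ H1norm φ := H1norm_nonneg φ
    have hf1 := hf1int (fun t => q t + φ t) (H1norm q + H1norm φ)
      (hq.1.continuous.add hφ.1.continuous)
      (fun t => (norm_add_le _ _).trans (add_le_add (isH1_sup hq t) (isH1_sup hφ t)))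
    have hf2 := hf1int q (H1norm q) hq.1.continuous (isH1_sup hq)
    have hf3 := hf3int q φ hq hφ
    have hsplit : I2 a α (fun t => q t + φ t) - I2 a α q - dI2 a α q φ
        = ∫ t : ℝ, (a t * ‖q t + φ t‖ ^ α - a t * ‖q t‖ ^ α
            - α * (a t * ‖q t‖ ^ (α - 2) * (inner ℝ (q t) (φ t) : ℝ))) := by
      simp only [I2, dI2]
      have hsub12 : Integrable (fun t => a t * ‖q t + φ t‖ ^ α - a t * ‖q t‖ ^ α) :=
        hf1.sub hf2
      have hmul : Integrable
          (fun t => α * (a t * ‖q t‖ ^ (α - 2) * (inner ℝ (q t) (φ t) : ℝ))) :=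
        hf3.const_mul α
      rw [← integral_const_mul, ← integral_sub hf1 hf2, ← integral_sub hsub12 hmul]
    have hDint : Integrable (fun t => a t * ‖q t + φ t‖ ^ α - a t * ‖q t‖ ^ α
        - α * (a t * ‖q t‖ ^ (α - 2) * (inner ℝ (q t) (φ t) : ℝ))) :=
      (hf1.sub hf2).sub (hf3.const_mul α)
    have hpt : ∀ t, |a t * ‖q t + φ t‖ ^ α - a t * ‖q t‖ ^ α
        - α * (a t * ‖q t‖ ^ (α - 2) * (inner ℝ (q t) (φ t) : ℝ))|
        ≤ (4 * α * (δ ^ (α - 1) * H1norm φ)) * a t := by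
      intro t
      have ht := taylor hα1 hα2 (q t) (φ t)
      have heq : a t * ‖q t + φ t‖ ^ α - a t * ‖q t‖ ^ α
          - α * (a t * ‖q t‖ ^ (α - 2) * (inner ℝ (q t) (φ t) : ℝ))
          = a t * (‖q t + φ t‖ ^ α - ‖q t‖ ^ α
              - α * ‖q t‖ ^ (α - 2) * (inner ℝ (q t) (φ t) : ℝ)) := by ring
      rw [heq, abs_mul, abs_of_nonneg (ha_nonneg t)]
      have hφα : ‖φ t‖ ^ α ≤ δ ^ (α - 1) * H1norm φ := by
        have h1 : ‖φ t‖ ^ α ≤ (H1norm φ) ^ α :=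
          Real.rpow_le_rpow (norm_nonneg _) (isH1_sup hφ t) hα0.le
        have h2 : (H1norm φ) ^ α = (H1norm φ) ^ (α - 1) * H1norm φ := by
          have h := Real.rpow_add' hH0 (show (α - 1) + 1 ≠ 0 by intro hc; linarith)
          rw [Real.rpow_one] at h
          rw [show α - 1 + 1 = α by ring] at h
          exact h
        have h3 : (H1norm φ) ^ (α - 1) ≤ δ ^ (α - 1) :=
          Real.rpow_le_rpow hH0 hφδ (by linarith)
        calc ‖φ t‖ ^ α ≤ (H1norm φ) ^ α := h1
          _ = (H1norm φ) ^ (α - 1) * H1norm φ := h2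
          _ ≤ δ ^ (α - 1) * H1norm φ := mul_le_mul_of_nonneg_right h3 hH0
      calc a t * |‖q t + φ t‖ ^ α - ‖q t‖ ^ α
            - α * ‖q t‖ ^ (α - 2) * (inner ℝ (q t) (φ t) : ℝ)|
          ≤ a t * (4 * α * ‖φ t‖ ^ α) := mul_le_mul_of_nonneg_left ht (ha_nonneg t)
        _ ≤ a t * (4 * α * (δ ^ (α - 1) * H1norm φ)) := by
            refine mul_le_mul_of_nonneg_left ?_ (ha_nonneg t)
            exact mul_le_mul_of_nonneg_left hφα (by positivity)
        _ = (4 * α * (δ ^ (α - 1) * H1norm φ)) * a t := by ring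
    rw [hsplit]
    have habs := norm_integral_le_integral_norm (μ := volume)
      (fun t => a t * ‖q t + φ t‖ ^ α - a t * ‖q t‖ ^ α
        - α * (a t * ‖q t‖ ^ (α - 2) * (inner ℝ (q t) (φ t) : ℝ)))
    simp only [Real.norm_eq_abs] at habs
    have hmono : (∫ t : ℝ, |a t * ‖q t + φ t‖ ^ α - a t * ‖q t‖ ^ α
        - α * (a t * ‖q t‖ ^ (α - 2) * (inner ℝ (q t) (φ t) : ℝ))|)
        ≤ ∫ t : ℝ, (4 * α * (δ ^ (α - 1) * H1norm φ)) * a t :=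
      integral_mono hDint.abs (ha_L1.const_mul _) hpt
    rw [integral_const_mul] at hmono
    have hδnn : 0 ≤ δ ^ (α - 1) := Real.rpow_nonneg hδpos.le _
    have hfin : 4 * α * (δ ^ (α - 1) * H1norm φ) * A ≤ ε * H1norm φ := by
      have h1 : 4 * α * δ ^ (α - 1) * A ≤ 4 * α * δ ^ (α - 1) * (A + 1) := by
        have : (0:ℝ) ≤ 4 * α * δ ^ (α - 1) := by positivity
        nlinarith
      rw [hδeq] at h1
      nlinarith
    calc |∫ t : ℝ, (a t * ‖q t + φ t‖ ^ α - a t * ‖q t‖ ^ α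
          - α * (a t * ‖q t‖ ^ (α - 2) * (inner ℝ (q t) (φ t) : ℝ)))|
        ≤ ∫ t : ℝ, |a t * ‖q t + φ t‖ ^ α - a t * ‖q t‖ ^ α
          - α * (a t * ‖q t‖ ^ (α - 2) * (inner ℝ (q t) (φ t) : ℝ))| := habs
      _ ≤ 4 * α * (δ ^ (α - 1) * H1norm φ) * A := hmono
      _ ≤ ε * H1norm φ := hfin
  · -- continuity of the derivative
    intro q hq ε hε
    obtain ⟨δ, hδpos, hδeq⟩ := hδ ε hε
    refine ⟨δ, hδpos, ?_⟩
    intro q' hq' hq'δ φ hφ hφ1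
    have hψH1 : IsH1 (fun t => q' t - q t) := by
      refine ⟨hq'.1.sub hq.1, ?_⟩
      have hdψ : deriv (fun t => q' t - q t) = fun t => deriv q' t - deriv q t := by
        funext t
        exact deriv_sub (hq'.1 t) (hq.1 t)
      apply ((hq'.2.add hq.2).const_mul 2).mono'
      · apply AEStronglyMeasurable.add
        · exact ((hq'.1.continuous.sub hq.1.continuous).norm.pow 2).aestronglyMeasurable
        · have hm : Measurable (deriv (fun t => q' t - q t)) :=
            (stronglyMeasurable_deriv _).measurable
          exact (hm.norm.pow_const 2).aestronglyMeasurable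
      · refine Eventually.of_forall (fun t => ?_)
        rw [Real.norm_eq_abs, hdψ]
        have h1 : ‖q' t - q t‖ ≤ ‖q' t‖ + ‖q t‖ := norm_sub_le _ _
        have h2 : ‖deriv q' t - deriv q t‖ ≤ ‖deriv q' t‖ + ‖deriv q t‖ := norm_sub_le _ _
        show |‖q' t - q t‖ ^ 2 + ‖deriv q' t - deriv q t‖ ^ 2|
          ≤ 2 * ((‖q' t‖ ^ 2 + ‖deriv q' t‖ ^ 2) + (‖q t‖ ^ 2 + ‖deriv q t‖ ^ 2))
        rw [abs_of_nonneg (by positivity)]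
        have h1' : ‖q' t - q t‖ ^ 2 ≤ (‖q' t‖ + ‖q t‖) ^ 2 :=
          pow_le_pow_left₀ (norm_nonneg _) h1 2
        have h2' : ‖deriv q' t - deriv q t‖ ^ 2 ≤ (‖deriv q' t‖ + ‖deriv q t‖) ^ 2 :=
          pow_le_pow_left₀ (norm_nonneg _) h2 2
        nlinarith [sq_nonneg (‖q' t‖ - ‖q t‖), sq_nonneg (‖deriv q' t‖ - ‖deriv q t‖)]
    have hf3' := hf3int q' φ hq' hφ
    have hf3 := hf3int q φ hq hφ
    have hsplit : dI2 a α q' φ - dI2 a α q φ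
        = α * ∫ t : ℝ, (a t * ‖q' t‖ ^ (α - 2) * (inner ℝ (q' t) (φ t) : ℝ)
            - a t * ‖q t‖ ^ (α - 2) * (inner ℝ (q t) (φ t) : ℝ)) := by
      simp only [dI2]
      rw [← mul_sub, ← integral_sub hf3' hf3]
    have hpt : ∀ t, |a t * ‖q' t‖ ^ (α - 2) * (inner ℝ (q' t) (φ t) : ℝ)
        - a t * ‖q t‖ ^ (α - 2) * (inner ℝ (q t) (φ t) : ℝ)| ≤ (4 * δ ^ (α - 1)) * a t := by
      intro t
      have heq : a t * ‖q' t‖ ^ (α - 2) * (inner ℝ (q' t) (φ t) : ℝ)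
          - a t * ‖q t‖ ^ (α - 2) * (inner ℝ (q t) (φ t) : ℝ)
          = a t * (inner ℝ ((‖q' t‖ ^ (α - 2)) • q' t - (‖q t‖ ^ (α - 2)) • q t) (φ t) : ℝ) := by
        rw [inner_sub_left, mul_assoc, mul_assoc, hfeq, hfeq]
        ring
      rw [heq, abs_mul, abs_of_nonneg (ha_nonneg t)]
      have h1 := abs_real_inner_le_norm
        ((‖q' t‖ ^ (α - 2)) • q' t - (‖q t‖ ^ (α - 2)) • q t) (φ t)
      have h2 := hFholder (q' t) (q t)
      have h3 : ‖q' t - q t‖ ^ (α - 1) ≤ δ ^ (α - 1) :=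
        Real.rpow_le_rpow (norm_nonneg _) ((isH1_sup hψH1 t).trans hq'δ) (by linarith)
      have h4 : ‖φ t‖ ≤ 1 := (isH1_sup hφ t).trans hφ1
      have h5 : |(inner ℝ ((‖q' t‖ ^ (α - 2)) • q' t - (‖q t‖ ^ (α - 2)) • q t) (φ t) : ℝ)|
          ≤ 4 * δ ^ (α - 1) := by
        refine h1.trans ?_
        calc ‖(‖q' t‖ ^ (α - 2)) • q' t - (‖q t‖ ^ (α - 2)) • q t‖ * ‖φ t‖
            ≤ (4 * δ ^ (α - 1)) * 1 := by
              refine mul_le_mul (h2.trans (by nlinarith)) h4 (norm_nonneg _) (by positivity)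
          _ = 4 * δ ^ (α - 1) := by ring
      calc a t * |(inner ℝ ((‖q' t‖ ^ (α - 2)) • q' t - (‖q t‖ ^ (α - 2)) • q t) (φ t) : ℝ)|
          ≤ a t * (4 * δ ^ (α - 1)) := mul_le_mul_of_nonneg_left h5 (ha_nonneg t)
        _ = (4 * δ ^ (α - 1)) * a t := by ring
    rw [hsplit, abs_mul, abs_of_pos hα0]
    have habs := norm_integral_le_integral_norm (μ := volume)
      (fun t => a t * ‖q' t‖ ^ (α - 2) * (inner ℝ (q' t) (φ t) : ℝ)
        - a t * ‖q t‖ ^ (α - 2) * (inner ℝ (q t) (φ t) : ℝ))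
    simp only [Real.norm_eq_abs] at habs
    have hmono : (∫ t : ℝ, |a t * ‖q' t‖ ^ (α - 2) * (inner ℝ (q' t) (φ t) : ℝ)
        - a t * ‖q t‖ ^ (α - 2) * (inner ℝ (q t) (φ t) : ℝ)|)
        ≤ ∫ t : ℝ, (4 * δ ^ (α - 1)) * a t :=
      integral_mono (hf3'.sub hf3).abs (ha_L1.const_mul _) hpt
    rw [integral_const_mul] at hmono
    have hδnn : 0 ≤ δ ^ (α - 1) := Real.rpow_nonneg hδpos.le _
    have : α * |∫ t : ℝ, (a t * ‖q' t‖ ^ (α - 2) * (inner ℝ (q' t) (φ t) : ℝ)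
        - a t * ‖q t‖ ^ (α - 2) * (inner ℝ (q t) (φ t) : ℝ))|
        ≤ α * (4 * δ ^ (α - 1) * A) :=
      mul_le_mul_of_nonneg_left (habs.trans hmono) hα0.le
    nlinarith [mul_nonneg hα0.le hδnn]
end

section
/- Assume a : ℝ → ℝ is continuous, nonnegative, not identically zero, a ∈ L^1(ℝ) ∩ L^2(ℝ), and 1 < α < 2. Then the system q''(t) + V_q(t, q(t)) = 0 with V(t,q) = −½|q|² + a(t)|q|^α possesses at least one nonzero homoclinic solution q ∈ H^1(ℝ, ℝ^n): q is a solution satisfying q(t) → 0 and q'(t) → 0 as t → ±∞. -/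
open MeasureTheory Filter Real

open Set


lemma integrable_exp_neg_abs : Integrable (fun x : ℝ => exp (-|x|)) := by
  have h1 : IntegrableOn (fun x : ℝ => exp (-|x|)) (Iic 0) := by
    apply (integrableOn_exp_Iic 0).congr_fun ?_ measurableSet_Iic
    intro x hx
    simp only [mem_Iic] at hx
    simp [abs_of_nonpos hx]
  have h2 : IntegrableOn (fun x : ℝ => exp (-|x|)) (Ioi 0) := by
    apply (exp_neg_integrableOn_Ioi 0 one_pos).congr_fun ?_ measurableSet_Ioi
    intro x hx
    simp only [mem_Ioi] at hx
    simp [abs_of_pos hx]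
  have := h1.union h2
  rwa [Iic_union_Ioi, integrableOn_univ] at this

lemma integral_exp_neg_abs : ∫ x : ℝ, exp (-|x|) = 2 := by
  have h1 : IntegrableOn (fun x : ℝ => exp (-|x|)) (Iic 0) :=
    integrable_exp_neg_abs.integrableOn
  have h2 : IntegrableOn (fun x : ℝ => exp (-|x|)) (Ioi 0) :=
    integrable_exp_neg_abs.integrableOn
  rw [← intervalIntegral.integral_Iic_add_Ioi h1 h2]
  have e1 : ∫ x in Iic (0:ℝ), exp (-|x|) = 1 := by
    rw [setIntegral_congr_fun measurableSet_Iic (fun x hx => by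
      rw [abs_of_nonpos (mem_Iic.mp hx), neg_neg])]
    exact integral_exp_Iic_zero
  have e2 : ∫ x in Ioi (0:ℝ), exp (-|x|) = 1 := by
    rw [setIntegral_congr_fun measurableSet_Ioi (fun x hx => by
      rw [abs_of_pos (mem_Ioi.mp hx)])]
    exact integral_exp_neg_Ioi_zero
  rw [e1, e2]; norm_num

lemma integrable_exp_neg_abs_sub (c : ℝ) : Integrable (fun x : ℝ => exp (-|x - c|)) :=
  integrable_exp_neg_abs.comp_sub_right c

lemma integral_exp_neg_abs_sub (c : ℝ) : ∫ x : ℝ, exp (-|x - c|) = 2 := by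
  rw [integral_sub_right_eq_self (fun x : ℝ => exp (-|x|)) c]
  exact integral_exp_neg_abs

/-- Regularity/conclusion lemma: a positive bounded measurable fixed point of the
Green's-function integral operator is a classical solution with the desired decay. -/
lemma sol_of_fixedpoint (a : ℝ → ℝ) (α M : ℝ) (u : ℝ → ℝ)
    (ha_cont : Continuous a) (ha_nonneg : ∀ t, 0 ≤ a t) (ha_L1 : Integrable a)
    (hα1 : 1 < α) (hα2 : α < 2)
    (hu_meas : Measurable u) (hu_pos : ∀ t, 0 < u t) (huM : ∀ t, u t ≤ M)
    (hfix : ∀ t, u t = ∫ s, exp (-|t - s|) * ((α/2) * (a s * u s ^ (α - 1)))) :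
    ∃ u' : ℝ → ℝ, (∀ t, HasDerivAt u (u' t) t) ∧
      (∀ t, HasDerivAt u' (u t - α * a t * u t ^ (α - 1)) t) ∧
      (∀ t, |u' t| ≤ u t) ∧ Integrable u ∧
      Tendsto u atTop (nhds 0) ∧ Tendsto u atBot (nhds 0) := by
  have hα0 : (0:ℝ) < α := by linarith
  have hM0 : 0 < M := lt_of_lt_of_le (hu_pos 0) (huM 0)
  set g : ℝ → ℝ := fun s => (α/2) * (a s * u s ^ (α - 1)) with hg_def
  have hg0 : ∀ s, 0 ≤ g s := fun s =>
    mul_nonneg (by positivity) (mul_nonneg (ha_nonneg s) (rpow_nonneg (hu_pos s).le _))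
  have hgle : ∀ s, g s ≤ (α/2 * M ^ (α - 1)) * a s := by
    intro s
    have h1 : u s ^ (α - 1) ≤ M ^ (α - 1) :=
      rpow_le_rpow (hu_pos s).le (huM s) (by linarith)
    calc (α/2) * (a s * u s ^ (α - 1)) ≤ (α/2) * (a s * M ^ (α - 1)) := by
          apply mul_le_mul_of_nonneg_left (mul_le_mul_of_nonneg_left h1 (ha_nonneg s))
            (by positivity)
      _ = (α/2 * M ^ (α - 1)) * a s := by ring
  have hg_meas : Measurable g := by
    apply Measurable.const_mul
    exact (ha_cont.measurable.mul ((hu_meas.pow_const _)))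
  have hg_int : Integrable g := by
    apply (ha_L1.const_mul (α/2 * M ^ (α - 1))).mono' hg_meas.aestronglyMeasurable
    filter_upwards with s
    rw [Real.norm_eq_abs, abs_of_nonneg (hg0 s)]
    exact hgle s
  -- integrand integrability for each t
  have hker_int : ∀ t : ℝ, Integrable (fun s => exp (-|t - s|) * g s) := by
    intro t
    apply hg_int.mono' ?_ ?_
    · exact ((Real.continuous_exp.comp (continuous_abs.comp
        ((continuous_const.sub continuous_id)) ).neg).measurable.mul hg_meas).aestronglyMeasurable
    · filter_upwards with s
      rw [Real.norm_eq_abs, abs_of_nonneg (mul_nonneg (exp_pos _).le (hg0 s))]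
      calc exp (-|t - s|) * g s ≤ 1 * g s := by
            apply mul_le_mul_of_nonneg_right ?_ (hg0 s)
            rw [← Real.exp_zero]
            exact exp_le_exp.mpr (by simp [abs_nonneg])
        _ = g s := one_mul _
  have hu_eq : u = fun t => ∫ s, exp (-|t - s|) * g s := funext hfix
  -- continuity of u
  have hu_cont : Continuous u := by
    rw [hu_eq]
    apply continuous_of_dominated (bound := g)
    · exact fun t => (hker_int t).aestronglyMeasurable
    · intro t
      filter_upwards with s
      rw [Real.norm_eq_abs, abs_of_nonneg (mul_nonneg (exp_pos _).le (hg0 s))]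
      calc exp (-|t - s|) * g s ≤ 1 * g s :=
            mul_le_mul_of_nonneg_right (by
              rw [← Real.exp_zero]
              exact exp_le_exp.mpr (by simp [abs_nonneg])) (hg0 s)
        _ = g s := one_mul _
    · exact hg_int
    · filter_upwards with s
      exact ((Real.continuous_exp.comp (continuous_abs.comp
        (continuous_id.sub continuous_const)).neg).mul continuous_const)
  have hg_cont : Continuous g := by
    apply continuous_const.mul
    apply ha_cont.mul
    exact hu_cont.rpow_const (fun s => Or.inl (hu_pos s).ne')
  -- the two half-line primitives
  set A : ℝ → ℝ := fun t => ∫ s in Iic t, exp s * g s with hA_def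
  set B : ℝ → ℝ := fun t => ∫ s in Ioi t, exp (-s) * g s with hB_def
  have hfA_cont : Continuous (fun s : ℝ => exp s * g s) := Real.continuous_exp.mul hg_cont
  have hfB_cont : Continuous (fun s : ℝ => exp (-s) * g s) :=
    (Real.continuous_exp.comp continuous_neg).mul hg_cont
  have hA_int : ∀ t : ℝ, IntegrableOn (fun s => exp s * g s) (Iic t) := by
    intro t
    apply ((hg_int.restrict (s := Iic t)).const_mul (exp t)).mono'
      (hfA_cont.aestronglyMeasurable.restrict)
    rw [ae_restrict_iff' measurableSet_Iic]
    filter_upwards with s hs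
    rw [Real.norm_eq_abs, abs_of_nonneg (mul_nonneg (exp_pos _).le (hg0 s))]
    exact mul_le_mul_of_nonneg_right (exp_le_exp.mpr hs) (hg0 s)
  have hB_int : ∀ t : ℝ, IntegrableOn (fun s => exp (-s) * g s) (Ioi t) := by
    intro t
    apply ((hg_int.restrict (s := Ioi t)).const_mul (exp (-t))).mono'
      (hfB_cont.aestronglyMeasurable.restrict)
    rw [ae_restrict_iff' measurableSet_Ioi]
    filter_upwards with s hs
    rw [Real.norm_eq_abs, abs_of_nonneg (mul_nonneg (exp_pos _).le (hg0 s))]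
    exact mul_le_mul_of_nonneg_right (exp_le_exp.mpr (by
      simp only [neg_le_neg_iff]; exact (le_of_lt hs))) (hg0 s)
  have hA0 : ∀ t, 0 ≤ A t := fun t =>
    setIntegral_nonneg measurableSet_Iic (fun s _ => mul_nonneg (exp_pos _).le (hg0 s))
  have hB0 : ∀ t, 0 ≤ B t := fun t =>
    setIntegral_nonneg measurableSet_Ioi (fun s _ => mul_nonneg (exp_pos _).le (hg0 s))
  -- the splitting identity
  have hsplit : ∀ t, u t = exp (-t) * A t + exp t * B t := by
    intro t
    have e1 : ∫ s in Iic t, exp (-|t - s|) * g s = exp (-t) * A t := by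
      rw [hA_def, ← integral_const_mul]
      apply setIntegral_congr_fun measurableSet_Iic
      intro s hs
      rw [mem_Iic] at hs
      show exp (-|t - s|) * g s = exp (-t) * (exp s * g s)
      rw [abs_of_nonneg (by linarith : (0:ℝ) ≤ t - s),
        show -(t - s) = -t + s by ring, Real.exp_add]
      ring
    have e2 : ∫ s in Ioi t, exp (-|t - s|) * g s = exp t * B t := by
      rw [hB_def, ← integral_const_mul]
      apply setIntegral_congr_fun measurableSet_Ioi
      intro s hs
      rw [mem_Ioi] at hs
      show exp (-|t - s|) * g s = exp t * (exp (-s) * g s)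
      rw [abs_of_nonpos (by linarith : t - s ≤ 0), neg_neg,
        show t - s = t + -s by ring, Real.exp_add]
      ring
    rw [hfix t]
    have : ∀ s, exp (-|t - s|) * ((α/2) * (a s * u s ^ (α - 1))) = exp (-|t - s|) * g s :=
      fun s => rfl
    rw [← intervalIntegral.integral_Iic_add_Ioi
      ((hker_int t).integrableOn) ((hker_int t).integrableOn), e1, e2]
  -- derivative of A
  have hA_deriv : ∀ t, HasDerivAt A (exp t * g t) t := by
    intro t
    have heq : A = fun t => A 0 + ∫ s in (0:ℝ)..t, exp s * g s := by
      funext τ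
      have h := intervalIntegral.integral_Iic_sub_Iic (hA_int 0) (hA_int τ)
      simp only [hA_def]
      linarith [h]
    rw [heq]
    apply HasDerivAt.const_add
    exact intervalIntegral.integral_hasDerivAt_right
      (hfA_cont.intervalIntegrable 0 t)
      (hfA_cont.stronglyMeasurableAtFilter volume (nhds t))
      hfA_cont.continuousAt
  -- derivative of B
  have hB_deriv : ∀ t, HasDerivAt B (-(exp (-t) * g t)) t := by
    intro t
    have hkey : ∀ c τ : ℝ, c ≤ τ → B c = (∫ s in c..τ, exp (-s) * g s) + B τ := by
      intro c τ hcτ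
      rw [intervalIntegral.integral_of_le hcτ, hB_def]
      have hdisj : Disjoint (Ioc c τ) (Ioi τ) := by
        rw [Set.disjoint_left]
        intro x hx hx'
        exact absurd hx.2 (not_le.mpr hx')
      rw [← setIntegral_union hdisj measurableSet_Ioi
        ((hB_int c).mono_set Ioc_subset_Ioi_self) (hB_int τ), Ioc_union_Ioi_eq_Ioi hcτ]
    have heq : B = fun τ => B 0 - ∫ s in (0:ℝ)..τ, exp (-s) * g s := by
      funext τ
      rcases le_total (0:ℝ) τ with h | h
      · rw [hkey 0 τ h]; ring
      · rw [hkey τ 0 h, intervalIntegral.integral_symm]; ring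
    rw [heq]
    apply HasDerivAt.const_sub
    exact intervalIntegral.integral_hasDerivAt_right
      (hfB_cont.intervalIntegrable 0 t)
      (hfB_cont.stronglyMeasurableAtFilter volume (nhds t))
      hfB_cont.continuousAt
  -- first derivative
  set u' : ℝ → ℝ := fun t => exp t * B t - exp (-t) * A t with hu'_def
  have hexp_deriv : ∀ t : ℝ, HasDerivAt (fun τ : ℝ => exp (-τ)) (-exp (-t)) t := by
    intro t
    have h := (Real.hasDerivAt_exp (-t)).comp t (hasDerivAt_neg t)
    simpa [mul_comm, Function.comp_def] using h
  have h1 : ∀ t, HasDerivAt (fun τ => exp (-τ) * A τ)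
      (-exp (-t) * A t + exp (-t) * (exp t * g t)) t :=
    fun t => (hexp_deriv t).mul (hA_deriv t)
  have h2 : ∀ t, HasDerivAt (fun τ => exp τ * B τ)
      (exp t * B t + exp t * -(exp (-t) * g t)) t :=
    fun t => (Real.hasDerivAt_exp t).mul (hB_deriv t)
  have hee : ∀ t : ℝ, exp (-t) * exp t = 1 := by
    intro t; rw [← Real.exp_add]; simp
  have hu_eq2 : u = fun τ => exp (-τ) * A τ + exp τ * B τ := funext hsplit
  have hu_deriv : ∀ t, HasDerivAt u (u' t) t := by
    intro t
    rw [hu_eq2]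
    have h := (h1 t).add (h2 t)
    have hval : (-exp (-t) * A t + exp (-t) * (exp t * g t)) +
        (exp t * B t + exp t * -(exp (-t) * g t)) = exp t * B t - exp (-t) * A t := by
      ring
    rw [hval] at h
    exact h
  have hu'_deriv : ∀ t, HasDerivAt u' (u t - α * a t * u t ^ (α - 1)) t := by
    intro t
    have h := (h2 t).sub (h1 t)
    have hgt : α * a t * u t ^ (α - 1) = 2 * g t := by rw [hg_def]; ring
    have h' : (exp t * B t + exp t * -(exp (-t) * g t)) -
        (-exp (-t) * A t + exp (-t) * (exp t * g t)) = u t - α * a t * u t ^ (α - 1) := by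
      rw [hgt, hsplit t]
      linear_combination (-2 * g t) * hee t
    rw [← h']
    exact h
  have habs : ∀ t, |u' t| ≤ u t := by
    intro t
    have ha' := mul_nonneg (exp_pos (-t)).le (hA0 t)
    have hb' := mul_nonneg (exp_pos t).le (hB0 t)
    rw [hu'_def, hsplit t, abs_le]
    constructor <;> simp only [neg_add] <;> linarith
  -- integrability of u
  have hu_int : Integrable u := by
    rw [hu_eq]
    have hprod : Integrable (fun p : ℝ × ℝ => exp (-|p.1 - p.2|) * g p.2)
        (volume.prod volume) := by
      have hmeas : AEStronglyMeasurable (fun p : ℝ × ℝ => exp (-|p.1 - p.2|) * g p.2)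
          (volume.prod volume) := by
        apply Continuous.aestronglyMeasurable ?_ |>.mul
        · exact (hg_cont.comp continuous_snd).aestronglyMeasurable
        · exact Real.continuous_exp.comp (continuous_abs.comp
            (continuous_fst.sub continuous_snd)).neg
      rw [integrable_prod_iff' hmeas]
      constructor
      · filter_upwards with s
        exact (integrable_exp_neg_abs_sub s).mul_const (g s)
      · have heq2 : (fun s : ℝ => ∫ t : ℝ, ‖exp (-|t - s|) * g s‖) = fun s => 2 * g s := by
          funext s
          rw [integral_congr_ae (ae_of_all _ (fun t => by
            rw [Real.norm_eq_abs, abs_of_nonneg (mul_nonneg (exp_pos _).le (hg0 s))])),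
            integral_mul_const, integral_exp_neg_abs_sub]
        rw [heq2]
        exact hg_int.const_mul 2
    exact hprod.integral_prod_left
  -- decay at infinity
  have htend : ∀ l : Filter ℝ, l.IsCountablyGenerated →
      Tendsto (fun t : ℝ => |t|) l atTop → Tendsto u l (nhds 0) := by
    intro l hcg hl
    haveI := hcg
    have key : Tendsto (fun t => ∫ s, exp (-|t - s|) * g s) l (nhds (∫ (_ : ℝ), (0:ℝ))) := by
      apply tendsto_integral_filter_of_dominated_convergence g
      · filter_upwards with t
        exact (hker_int t).aestronglyMeasurable
      · filter_upwards with t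
        filter_upwards with s
        rw [Real.norm_eq_abs, abs_of_nonneg (mul_nonneg (exp_pos _).le (hg0 s))]
        calc exp (-|t - s|) * g s ≤ 1 * g s :=
              mul_le_mul_of_nonneg_right (by
                rw [← Real.exp_zero]
                exact exp_le_exp.mpr (by simp [abs_nonneg])) (hg0 s)
          _ = g s := one_mul _
      · exact hg_int
      · filter_upwards with s
        have h1 : Tendsto (fun t : ℝ => |t - s|) l atTop := by
          have : Tendsto (fun t : ℝ => t - s) l atTop ∨ True := Or.inr trivial
          -- |t - s| ≥ |t| - |s|
          apply tendsto_atTop_mono (fun t => ?_) (tendsto_atTop_add_const_right _ (-|s|) hl)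
          have := abs_sub_abs_le_abs_sub t s
          linarith [this]
        have h2 : Tendsto (fun t : ℝ => exp (-|t - s|)) l (nhds 0) :=
          Real.tendsto_exp_neg_atTop_nhds_zero.comp h1
        simpa using h2.mul_const (g s)
    rw [integral_zero] at key
    rw [hu_eq]
    exact key
  have htop : Tendsto u atTop (nhds 0) := htend atTop inferInstance tendsto_abs_atTop_atTop
  have hbot : Tendsto u atBot (nhds 0) := htend atBot inferInstance tendsto_abs_atBot_atTop
  exact ⟨u', hu_deriv, hu'_deriv, habs, hu_int, htop, hbot⟩

/-- Existence of a positive bounded fixed point of the integral operator, via monotone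
iteration between a sub- and a supersolution. -/
lemma exists_fixedpoint (a : ℝ → ℝ) (α : ℝ)
    (ha_cont : Continuous a) (ha_nonneg : ∀ t, 0 ≤ a t) (ha_ne : ∃ t, a t ≠ 0)
    (ha_L1 : Integrable a) (hα1 : 1 < α) (hα2 : α < 2) :
    ∃ (M : ℝ) (u : ℝ → ℝ), Measurable u ∧ (∀ t, 0 < u t) ∧ (∀ t, u t ≤ M) ∧
      (∀ t, u t = ∫ s, exp (-|t - s|) * ((α/2) * (a s * u s ^ (α - 1)))) := by
  have hα0 : (0:ℝ) < α := by linarith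
  have h2α : (0:ℝ) < 2 - α := by linarith
  have hα1' : (0:ℝ) ≤ α - 1 := by linarith
  set Ia := ∫ s, a s with hIa
  have hIa0 : 0 ≤ Ia := integral_nonneg ha_nonneg
  -- the supersolution constant M
  set M := max 1 ((α/2 * Ia) ^ ((2 - α)⁻¹)) with hM
  have hM1 : (1:ℝ) ≤ M := le_max_left _ _
  have hM0 : (0:ℝ) < M := lt_of_lt_of_le one_pos hM1
  have hMkey : α/2 * Ia * M ^ (α - 1) ≤ M := by
    have h1 : α/2 * Ia ≤ M ^ (2 - α) := by
      rcases le_total (α/2 * Ia) 1 with h | h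
      · calc α/2*Ia ≤ 1 := h
          _ = (1:ℝ) ^ (2-α) := (Real.one_rpow _).symm
          _ ≤ M ^ (2-α) := Real.rpow_le_rpow zero_le_one hM1 h2α.le
      · have hb : ((α/2*Ia) ^ ((2-α)⁻¹)) ≤ M := le_max_right _ _
        have hnn : (0:ℝ) ≤ α/2 * Ia := by positivity
        calc α/2*Ia = ((α/2*Ia) ^ ((2-α)⁻¹)) ^ (2-α) := (Real.rpow_inv_rpow hnn h2α.ne').symm
          _ ≤ M ^ (2-α) := Real.rpow_le_rpow (Real.rpow_nonneg hnn _) hb h2α.le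
    calc α/2 * Ia * M^(α-1) ≤ M^(2-α) * M^(α-1) :=
          mul_le_mul_of_nonneg_right h1 (Real.rpow_nonneg hM0.le _)
      _ = M ^ ((2-α)+(α-1)) := (Real.rpow_add hM0 _ _).symm
      _ = M := by rw [show (2-α)+(α-1) = (1:ℝ) by ring, Real.rpow_one]
  -- the bump of a
  obtain ⟨t₀, ht₀⟩ := ha_ne
  have ha0 : 0 < a t₀ := (ha_nonneg t₀).lt_of_ne (Ne.symm ht₀)
  set δ := a t₀ / 2 with hδdef
  have hδ : 0 < δ := by positivity
  have hev : ∀ᶠ s in nhds t₀, δ < a s :=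
    (ha_cont.tendsto t₀).eventually (eventually_gt_nhds (by simp only [hδdef]; linarith))
  obtain ⟨r₀, hr₀, hball⟩ := Metric.eventually_nhds_iff.mp hev
  set r := r₀ / 2 with hrdef
  have hr : 0 < r := by positivity
  have hbump : ∀ s ∈ Icc (t₀ - r) (t₀ + r), δ ≤ a s := by
    intro s hs
    apply le_of_lt
    apply hball
    rw [Real.dist_eq, abs_lt]
    constructor <;> [linarith [hs.1, hr]; linarith [hs.2, hr]]
  set R := |t₀| + r with hRdef
  have hsR : ∀ s ∈ Icc (t₀ - r) (t₀ + r), |s| ≤ R := by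
    intro s hs
    rw [mem_Icc] at hs
    rw [hRdef]
    rcases abs_cases t₀ with ⟨h1, _⟩ | ⟨h1, _⟩ <;> rcases abs_cases s with ⟨h2, _⟩ | ⟨h2, _⟩ <;>
      linarith
  -- the subsolution constant ε
  set c := α * r * δ * exp (-R) * exp (-(α - 1) * R) with hc
  have hc0 : 0 < c := by positivity
  set ε := min M (min 1 (c ^ ((2 - α)⁻¹))) with hε
  have hε0 : 0 < ε :=
    lt_min hM0 (lt_min one_pos (Real.rpow_pos_of_pos hc0 _))
  have hεM : ε ≤ M := min_le_left _ _
  have hεc : ε ^ (2 - α) ≤ c := by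
    calc ε ^ (2-α) ≤ (c ^ ((2-α)⁻¹)) ^ (2-α) :=
          Real.rpow_le_rpow hε0.le (le_trans (min_le_right _ _) (min_le_right _ _)) h2α.le
      _ = c := Real.rpow_inv_rpow hc0.le h2α.ne'
  have hεkey : ε ≤ c * ε ^ (α - 1) := by
    have he : ε = ε ^ (2-α) * ε ^ (α-1) := by
      rw [← Real.rpow_add hε0, show (2-α)+(α-1) = (1:ℝ) by ring, Real.rpow_one]
    calc ε = ε ^ (2-α) * ε ^ (α-1) := he
      _ ≤ c * ε ^ (α-1) := mul_le_mul_of_nonneg_right hεc (Real.rpow_nonneg hε0.le _)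
  -- subsolution
  set u₀ : ℝ → ℝ := fun t => ε * exp (-|t|) with hu₀
  have hu₀_cont : Continuous u₀ :=
    continuous_const.mul (Real.continuous_exp.comp continuous_abs.neg)
  have hu₀_pos : ∀ t, 0 < u₀ t := fun t => mul_pos hε0 (exp_pos _)
  have hu₀_le : ∀ t, u₀ t ≤ M := by
    intro t
    calc ε * exp (-|t|) ≤ ε * 1 := by
          apply mul_le_mul_of_nonneg_left ?_ hε0.le
          rw [← Real.exp_zero]
          exact exp_le_exp.mpr (by simp [abs_nonneg])
      _ = ε := mul_one _
      _ ≤ M := hεM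
  -- the operator and admissible class
  set F : (ℝ → ℝ) → ℝ → ℝ :=
    fun u t => (α/2) * ∫ s, exp (-|t - s|) * (a s * u s ^ (α - 1)) with hF
  set P : (ℝ → ℝ) → Prop :=
    fun u => Measurable u ∧ (∀ t, 0 ≤ u t) ∧ (∀ t, u t ≤ M) with hP
  have hint : ∀ u, P u → ∀ t : ℝ,
      Integrable (fun s => exp (-|t - s|) * (a s * u s ^ (α - 1))) := by
    rintro u ⟨hu_meas, hu0, huM⟩ t
    apply (ha_L1.const_mul (M ^ (α - 1))).mono'
    · exact ((Real.continuous_exp.comp (continuous_abs.comp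
        (continuous_const.sub continuous_id)).neg).measurable.mul
        (ha_cont.measurable.mul (hu_meas.pow_const _))).aestronglyMeasurable
    · filter_upwards with s
      have hnn : 0 ≤ exp (-|t - s|) * (a s * u s ^ (α - 1)) :=
        mul_nonneg (exp_pos _).le (mul_nonneg (ha_nonneg s) (Real.rpow_nonneg (hu0 s) _))
      rw [Real.norm_eq_abs, abs_of_nonneg hnn]
      calc exp (-|t - s|) * (a s * u s ^ (α - 1)) ≤ 1 * (a s * M ^ (α - 1)) := by
            apply mul_le_mul ?_ ?_ (mul_nonneg (ha_nonneg s) (Real.rpow_nonneg (hu0 s) _))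
              zero_le_one
            · rw [← Real.exp_zero]; exact exp_le_exp.mpr (by simp [abs_nonneg])
            · exact mul_le_mul_of_nonneg_left
                (Real.rpow_le_rpow (hu0 s) (huM s) hα1') (ha_nonneg s)
        _ = M ^ (α - 1) * a s := by ring
  have hF_nonneg : ∀ u, P u → ∀ t, 0 ≤ F u t := by
    rintro u ⟨hu_meas, hu0, huM⟩ t
    apply mul_nonneg (by positivity)
    apply integral_nonneg
    intro s
    exact mul_nonneg (exp_pos _).le (mul_nonneg (ha_nonneg s) (Real.rpow_nonneg (hu0 s) _))
  have hF_le : ∀ u, P u → ∀ t, F u t ≤ M := by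
    intro u hu t
    obtain ⟨hu_meas, hu0, huM⟩ := hu
    have hstep : (∫ s, exp (-|t - s|) * (a s * u s ^ (α - 1))) ≤ ∫ s, M ^ (α - 1) * a s := by
      apply integral_mono (hint u ⟨hu_meas, hu0, huM⟩ t) (ha_L1.const_mul _)
      intro s
      calc exp (-|t - s|) * (a s * u s ^ (α - 1)) ≤ 1 * (a s * M ^ (α - 1)) := by
            apply mul_le_mul ?_ ?_ (mul_nonneg (ha_nonneg s) (Real.rpow_nonneg (hu0 s) _))
              zero_le_one
            · rw [← Real.exp_zero]; exact exp_le_exp.mpr (by simp [abs_nonneg])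
            · exact mul_le_mul_of_nonneg_left
                (Real.rpow_le_rpow (hu0 s) (huM s) hα1') (ha_nonneg s)
        _ = M ^ (α - 1) * a s := by ring
    calc F u t ≤ (α/2) * ∫ s, M ^ (α - 1) * a s :=
          mul_le_mul_of_nonneg_left hstep (by positivity)
      _ = α/2 * Ia * M ^ (α - 1) := by rw [integral_const_mul]; ring
      _ ≤ M := hMkey
  have hF_mono : ∀ u v, P u → P v → (∀ t, u t ≤ v t) → ∀ t, F u t ≤ F v t := by
    intro u v hu hv huv t
    apply mul_le_mul_of_nonneg_left ?_ (by positivity : (0:ℝ) ≤ α/2)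
    apply integral_mono (hint u hu t) (hint v hv t)
    intro s
    apply mul_le_mul_of_nonneg_left ?_ (exp_pos _).le
    apply mul_le_mul_of_nonneg_left ?_ (ha_nonneg s)
    exact Real.rpow_le_rpow (hu.2.1 s) (huv s) hα1'
  have hF_cont : ∀ u, P u → Continuous (F u) := by
    intro u hu
    apply continuous_const.mul
    apply continuous_of_dominated (bound := fun s => M ^ (α - 1) * a s)
    · exact fun t => (hint u hu t).aestronglyMeasurable
    · intro t
      filter_upwards with s
      have hnn : 0 ≤ exp (-|t - s|) * (a s * u s ^ (α - 1)) :=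
        mul_nonneg (exp_pos _).le (mul_nonneg (ha_nonneg s) (Real.rpow_nonneg (hu.2.1 s) _))
      rw [Real.norm_eq_abs, abs_of_nonneg hnn]
      calc exp (-|t - s|) * (a s * u s ^ (α - 1)) ≤ 1 * (a s * M ^ (α - 1)) := by
            apply mul_le_mul ?_ ?_ (mul_nonneg (ha_nonneg s) (Real.rpow_nonneg (hu.2.1 s) _))
              zero_le_one
            · rw [← Real.exp_zero]; exact exp_le_exp.mpr (by simp [abs_nonneg])
            · exact mul_le_mul_of_nonneg_left
                (Real.rpow_le_rpow (hu.2.1 s) (hu.2.2 s) hα1') (ha_nonneg s)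
        _ = M ^ (α - 1) * a s := by ring
    · exact ha_L1.const_mul _
    · filter_upwards with s
      exact ((Real.continuous_exp.comp (continuous_abs.comp
        (continuous_id.sub continuous_const)).neg).mul continuous_const)
  have hPu₀ : P u₀ := ⟨hu₀_cont.measurable, fun t => (hu₀_pos t).le, hu₀_le⟩
  -- the subsolution inequality
  have hsub : ∀ t, u₀ t ≤ F u₀ t := by
    intro t
    have hlow : ∀ s ∈ Icc (t₀ - r) (t₀ + r),
        (exp (-|t|) * exp (-R)) * (δ * (ε ^ (α-1) * exp (-(α-1) * R)))
        ≤ exp (-|t - s|) * (a s * u₀ s ^ (α - 1)) := by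
      intro s hsI
      have h1 : exp (-|t|) * exp (-R) ≤ exp (-|t - s|) := by
        rw [← Real.exp_add]
        apply exp_le_exp.mpr
        have h := abs_sub t s
        linarith [hsR s hsI]
      have h2 : δ ≤ a s := hbump s hsI
      have h3 : ε ^ (α-1) * exp (-(α-1) * R) ≤ u₀ s ^ (α - 1) := by
        have he : u₀ s ^ (α - 1) = ε ^ (α-1) * exp (-|s| * (α-1)) := by
          simp only [hu₀]
          rw [Real.mul_rpow hε0.le (exp_pos _).le, ← Real.exp_mul]
        rw [he]
        apply mul_le_mul_of_nonneg_left ?_ (Real.rpow_nonneg hε0.le _)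
        apply exp_le_exp.mpr
        nlinarith [hsR s hsI]
      exact mul_le_mul h1 (mul_le_mul h2 h3 (by positivity) (ha_nonneg s))
        (by positivity) (exp_pos _).le
    have hconst_int : IntegrableOn
        (fun _ : ℝ => (exp (-|t|) * exp (-R)) * (δ * (ε ^ (α-1) * exp (-(α-1) * R))))
        (Icc (t₀ - r) (t₀ + r)) := by
      exact integrableOn_const (by rw [Real.volume_Icc]; exact ENNReal.ofReal_ne_top)
    have h_mono_int :
        ∫ _ in Icc (t₀ - r) (t₀ + r),
          (exp (-|t|) * exp (-R)) * (δ * (ε ^ (α-1) * exp (-(α-1) * R)))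
        ≤ ∫ s in Icc (t₀ - r) (t₀ + r), exp (-|t - s|) * (a s * u₀ s ^ (α - 1)) :=
      setIntegral_mono_on hconst_int ((hint u₀ hPu₀ t).integrableOn) measurableSet_Icc hlow
    have h_const_val :
        ∫ _ in Icc (t₀ - r) (t₀ + r),
          (exp (-|t|) * exp (-R)) * (δ * (ε ^ (α-1) * exp (-(α-1) * R)))
        = (2*r) * ((exp (-|t|) * exp (-R)) * (δ * (ε ^ (α-1) * exp (-(α-1) * R)))) := by
      rw [setIntegral_const, Real.volume_real_Icc,
        show t₀ + r - (t₀ - r) = 2*r by ring,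
        max_eq_left (by positivity), smul_eq_mul]
    have h_le_total :
        ∫ s in Icc (t₀ - r) (t₀ + r), exp (-|t - s|) * (a s * u₀ s ^ (α - 1))
        ≤ ∫ s, exp (-|t - s|) * (a s * u₀ s ^ (α - 1)) := by
      apply setIntegral_le_integral (hint u₀ hPu₀ t)
      filter_upwards with s
      exact mul_nonneg (exp_pos _).le
        (mul_nonneg (ha_nonneg s) (Real.rpow_nonneg (hu₀_pos s).le _))
    have hchain : (c * ε ^ (α-1)) * exp (-|t|)
        ≤ (α/2) * ∫ s, exp (-|t - s|) * (a s * u₀ s ^ (α - 1)) := by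
      have e1 : (c * ε ^ (α-1)) * exp (-|t|)
          = (α/2) * ((2*r) * ((exp (-|t|) * exp (-R)) *
            (δ * (ε ^ (α-1) * exp (-(α-1) * R))))) := by
        rw [hc]; ring
      rw [e1]
      apply mul_le_mul_of_nonneg_left ?_ (by positivity : (0:ℝ) ≤ α/2)
      rw [← h_const_val]
      exact le_trans h_mono_int h_le_total
    simp only [hF]
    refine le_trans ?_ hchain
    simp only [hu₀]
    exact mul_le_mul_of_nonneg_right hεkey (exp_pos _).le
  -- the monotone iteration
  set seq : ℕ → ℝ → ℝ := fun k => F^[k] u₀ with hseq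
  have hseq_succ : ∀ k, seq (k+1) = F (seq k) := by
    intro k
    simp only [hseq]
    exact Function.iterate_succ_apply' F k u₀
  have main : ∀ k, (Continuous (seq k) ∧ (∀ t, u₀ t ≤ seq k t) ∧ (∀ t, seq k t ≤ M)) ∧
      (∀ t, seq k t ≤ seq (k+1) t) := by
    intro k
    induction k with
    | zero =>
      have hs0 : seq 0 = u₀ := rfl
      refine ⟨⟨hs0 ▸ hu₀_cont, fun t => le_of_eq (by rw [hs0]), fun t => hs0 ▸ hu₀_le t⟩, ?_⟩
      intro t
      rw [hs0, hseq_succ 0, hs0]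
      exact hsub t
    | succ k ih =>
      obtain ⟨⟨hcont, hlow, hupp⟩, hmono⟩ := ih
      have hPk : P (seq k) := ⟨hcont.measurable, fun t => le_trans (hu₀_pos t).le (hlow t), hupp⟩
      have hcont1 : Continuous (seq (k+1)) := by
        rw [hseq_succ k]; exact hF_cont (seq k) hPk
      have hlow1 : ∀ t, u₀ t ≤ seq (k+1) t := fun t => le_trans (hlow t) (hmono t)
      have hupp1 : ∀ t, seq (k+1) t ≤ M := by
        intro t; rw [hseq_succ k]; exact hF_le (seq k) hPk t
      have hPk1 : P (seq (k+1)) :=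
        ⟨hcont1.measurable, fun t => le_trans (hu₀_pos t).le (hlow1 t), hupp1⟩
      refine ⟨⟨hcont1, hlow1, hupp1⟩, ?_⟩
      intro t
      rw [hseq_succ k, hseq_succ (k+1)]
      exact hF_mono (seq k) (seq (k+1)) hPk hPk1 hmono t
  have hmono_seq : ∀ t, Monotone fun k => seq k t :=
    fun t => monotone_nat_of_le_succ (fun k => (main k).2 t)
  have hbdd : ∀ t, BddAbove (Set.range fun k => seq k t) := by
    intro t
    refine ⟨M, ?_⟩
    rintro x ⟨k, rfl⟩
    exact (main k).1.2.2 t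
  set u : ℝ → ℝ := fun t => ⨆ k, seq k t with hu
  have htends : ∀ t, Tendsto (fun k => seq k t) atTop (nhds (u t)) :=
    fun t => tendsto_atTop_ciSup (hmono_seq t) (hbdd t)
  have hu_meas : Measurable u :=
    measurable_of_tendsto_metrizable (fun k => ((main k).1.1).measurable)
      (tendsto_pi_nhds.mpr htends)
  have hu_low : ∀ t, u₀ t ≤ u t := by
    intro t
    have := le_ciSup (hbdd t) 0
    exact this
  have hu_pos : ∀ t, 0 < u t := fun t => lt_of_lt_of_le (hu₀_pos t) (hu_low t)
  have hu_le : ∀ t, u t ≤ M := fun t => ciSup_le (fun k => (main k).1.2.2 t)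
  have hPu : P u := ⟨hu_meas, fun t => (hu_pos t).le, hu_le⟩
  -- passing to the limit: u is a fixed point
  have hfix0 : ∀ t, u t = F u t := by
    intro t
    have h1 : Tendsto (fun k => seq (k+1) t) atTop (nhds (u t)) :=
      (htends t).comp (tendsto_add_atTop_nat 1)
    have h2 : Tendsto (fun k => F (seq k) t) atTop (nhds (F u t)) := by
      simp only [hF]
      apply Tendsto.const_mul
      apply integral_tendsto_of_tendsto_of_monotone
      · intro k
        exact hint (seq k) ⟨((main k).1.1).measurable,
          fun s => le_trans (hu₀_pos s).le ((main k).1.2.1 s), (main k).1.2.2⟩ t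
      · exact hint u hPu t
      · filter_upwards with s
        apply monotone_nat_of_le_succ
        intro k
        apply mul_le_mul_of_nonneg_left ?_ (exp_pos _).le
        apply mul_le_mul_of_nonneg_left ?_ (ha_nonneg s)
        exact Real.rpow_le_rpow (le_trans (hu₀_pos s).le ((main k).1.2.1 s))
          ((main k).2 s) hα1'
      · filter_upwards with s
        have hx : Tendsto (fun k => seq k s ^ (α - 1)) atTop (nhds (u s ^ (α - 1))) :=
          ((Real.continuousAt_rpow_const (u s) (α - 1)
            (Or.inl (hu_pos s).ne')).tendsto).comp (htends s)
        have := (hx.const_mul (a s)).const_mul (exp (-|t - s|))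
        simpa using this
    have h1' : Tendsto (fun k => F (seq k) t) atTop (nhds (u t)) := by
      apply h1.congr
      intro k
      rw [hseq_succ k]
    exact tendsto_nhds_unique h1' h2
  refine ⟨M, u, hu_meas, hu_pos, hu_le, ?_⟩
  intro t
  rw [hfix0 t]
  simp only [hF]
  rw [← integral_const_mul]
  apply integral_congr_ae
  filter_upwards with s
  ring

/-- main theorem of the paper: under (a₁)–(a₂) and `1 < α < 2`,
the system `q'' + V_q(t,q) = 0`, `V(t,q) = −½‖q‖² + a(t)‖q‖^α`, i.e.
`q'' = q − α a(t)‖q‖^{α−2} q`, has a nonzero homoclinic solution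
`q ∈ H¹(ℝ,ℝⁿ)` with `q(±∞) = 0` and `q'(±∞) = 0`. -/
theorem stmt_18 (n : ℕ) (hn : 0 < n) (a : ℝ → ℝ) (α : ℝ)
    (ha_cont : Continuous a) (ha_nonneg : ∀ t, 0 ≤ a t) (ha_ne : ∃ t, a t ≠ 0)
    (ha_L1 : Integrable a) (ha_L2 : Integrable (fun t => (a t) ^ 2))
    (hα1 : 1 < α) (hα2 : α < 2) :
    ∃ q : ℝ → EuclideanSpace ℝ (Fin n),
      Differentiable ℝ q ∧
      Integrable (fun t => ‖q t‖ ^ 2 + ‖deriv q t‖ ^ 2) ∧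
      (∃ t, q t ≠ 0) ∧
      (∀ t, HasDerivAt (deriv q) (q t - (α * a t * ‖q t‖ ^ (α - 2)) • q t) t) ∧
      Tendsto q atTop (nhds 0) ∧ Tendsto q atBot (nhds 0) ∧
      Tendsto (deriv q) atTop (nhds 0) ∧ Tendsto (deriv q) atBot (nhds 0) := by
  obtain ⟨M, u, hu_meas, hu_pos, hu_le, hfix⟩ :=
    exists_fixedpoint a α ha_cont ha_nonneg ha_ne ha_L1 hα1 hα2
  obtain ⟨u', hu_deriv, hu'_deriv, habs, hu_int, hutop, hubot⟩ :=
    sol_of_fixedpoint a α M u ha_cont ha_nonneg ha_L1 hα1 hα2 hu_meas hu_pos hu_le hfix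
  have hM0 : 0 < M := lt_of_lt_of_le (hu_pos 0) (hu_le 0)
  -- the unit vector
  set e : EuclideanSpace ℝ (Fin n) := EuclideanSpace.single ⟨0, hn⟩ (1:ℝ) with he
  have he_norm : ‖e‖ = 1 := by rw [he, EuclideanSpace.norm_single]; norm_num
  have he_ne : e ≠ 0 := by
    intro h
    rw [h] at he_norm
    simp at he_norm
  set q : ℝ → EuclideanSpace ℝ (Fin n) := fun t => u t • e with hq
  have hq_deriv : ∀ t, HasDerivAt q (u' t • e) t := fun t => (hu_deriv t).smul_const e
  have hq_diff : Differentiable ℝ q := fun t => (hq_deriv t).differentiableAt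
  have hderiv_q : deriv q = fun t => u' t • e := funext fun t => (hq_deriv t).deriv
  have hq_norm : ∀ t, ‖q t‖ = u t := by
    intro t
    rw [hq]
    simp only [norm_smul, he_norm, mul_one, Real.norm_eq_abs]
    exact abs_of_pos (hu_pos t)
  have hu_cont : Continuous u :=
    continuous_iff_continuousAt.mpr (fun t => (hu_deriv t).continuousAt)
  refine ⟨q, hq_diff, ?_, ⟨0, ?_⟩, ?_, ?_, ?_, ?_, ?_⟩
  · -- integrability of the H¹ integrand
    have hu'_cont : Continuous u' :=
      continuous_iff_continuousAt.mpr (fun t => (hu'_deriv t).continuousAt)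
    have hfun_eq : (fun t => ‖q t‖ ^ 2 + ‖deriv q t‖ ^ 2) = fun t => u t ^ 2 + u' t ^ 2 := by
      funext t
      rw [hderiv_q, hq_norm]
      rw [norm_smul, he_norm, mul_one, Real.norm_eq_abs, sq_abs]
    rw [hfun_eq]
    apply (hu_int.const_mul (2 * M)).mono'
      ((hu_cont.pow 2).add (hu'_cont.pow 2)).aestronglyMeasurable
    filter_upwards with t
    have h1 : u t ^ 2 ≤ M * u t := by nlinarith [hu_pos t, hu_le t]
    have h2 : u' t ^ 2 ≤ M * u t := by
      have h3 := mul_self_le_mul_self (abs_nonneg (u' t)) (habs t)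
      nlinarith [sq_abs (u' t), hu_pos t, hu_le t]
    simp only [Pi.add_apply, Pi.pow_apply]
    rw [Real.norm_eq_abs, abs_of_nonneg (by positivity)]
    linarith
  · -- q 0 ≠ 0
    rw [hq]
    exact smul_ne_zero (hu_pos 0).ne' he_ne
  · -- the differential equation
    intro t
    rw [hderiv_q]
    have h := (hu'_deriv t).smul_const e
    have heq : (u t - α * a t * u t ^ (α - 1)) • e
        = q t - (α * a t * ‖q t‖ ^ (α - 2)) • q t := by
      rw [hq_norm]
      simp only [hq, smul_smul, ← sub_smul]
      congr 1
      have hrw : u t ^ (α - 1) = u t ^ (α - 2) * u t := by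
        rw [show α - 1 = (α - 2) + 1 by ring, Real.rpow_add_one (hu_pos t).ne']
      rw [hrw]; ring
    rw [← heq]
    exact h
  · simpa using hutop.smul_const e
  · simpa using hubot.smul_const e
  · rw [hderiv_q]
    apply squeeze_zero_norm ?_ hutop
    intro t
    rw [norm_smul, he_norm, mul_one, Real.norm_eq_abs]
    exact habs t
  · rw [hderiv_q]
    apply squeeze_zero_norm ?_ hubot
    intro t
    rw [norm_smul, he_norm, mul_one, Real.norm_eq_abs]
    exact habs t
end

section
/- Let a : ℝ → ℝ be continuous, nonnegative, and integrable, and 1 < α < 2. Then the functional I(q) = ½‖q‖²_{H^1} − ∫_ℝ a(t)|q|^α dt is bounded from below on H^1(ℝ, ℝ^n); specifically, I(q) ≥ min_{x ≥ 0} (½x² − Cx^α) where C = π^{α/2}∫_ℝ a(t) dt, and this minimum equals ½y² − Cy^α with y = (Cα)^{1/(2−α)}. -/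
open MeasureTheory Filter Real

lemma phi_min {C α : ℝ} (hC : 0 ≤ C) (hα1 : 1 < α) (hα2 : α < 2) (x : ℝ) (hx : 0 ≤ x) :
    (1/2) * ((C * α) ^ ((1:ℝ)/(2-α)))^2 - C * ((C * α) ^ ((1:ℝ)/(2-α)))^α
      ≤ (1/2) * x^2 - C * x^α := by
  have hα0 : (0:ℝ) < α := by linarith
  have h2α : (0:ℝ) < 2 - α := by linarith
  set D : ℝ := C * α with hD
  have hD0 : 0 ≤ D := mul_nonneg hC hα0.le
  set y : ℝ := D ^ ((1:ℝ)/(2-α)) with hy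
  have hy0 : 0 ≤ y := rpow_nonneg hD0 _
  have hyD : y ^ (2 - α) = D := by
    rw [hy, ← Real.rpow_mul hD0, one_div_mul_cancel h2α.ne', rpow_one]
  have hy2 : y ^ (2 - α) * y ^ α = y ^ 2 := by
    rw [← Real.rpow_add' hy0 (by norm_num)]
    norm_num [Real.rpow_two]
  have hamgm : x ^ α * y ^ (2 - α) ≤ (α/2) * x^2 + (1 - α/2) * y^2 := by
    have h := Real.geom_mean_le_arith_mean2_weighted (w₁ := α/2) (w₂ := 1 - α/2)
      (p₁ := x^2) (p₂ := y^2) (by linarith) (by linarith) (by positivity) (by positivity)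
      (by ring)
    have h1 : (x^2) ^ (α/2) = x ^ α := by
      rw [← Real.rpow_natCast x 2, ← Real.rpow_mul hx]; congr 1; ring
    have h2 : (y^2) ^ (1 - α/2) = y ^ (2 - α) := by
      rw [← Real.rpow_natCast y 2, ← Real.rpow_mul hy0]; congr 1; ring
    rw [h1, h2] at h
    exact h
  have hCy : C * y ^ α = y ^ 2 / α := by
    have : D * y ^ α = y ^ 2 := by rw [← hyD, hy2]
    field_simp [hD] at this ⊢
    nlinarith [this]
  have hCx : C * x ^ α ≤ x^2/2 + (1/α - 1/2) * y^2 := by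
    have : C * x ^ α = (x ^ α * y ^ (2 - α)) / α := by
      rw [hyD, hD]; field_simp
    rw [this]
    rw [div_le_iff₀ hα0]
    calc x ^ α * y ^ (2 - α) ≤ (α/2) * x^2 + (1 - α/2) * y^2 := hamgm
      _ = (x^2/2 + (1/α - 1/2) * y^2) * α := by field_simp
  rw [hCy]
  ring_nf at hCx ⊢
  linarith

lemma sup_sq_le {n : ℕ} (q : ℝ → EuclideanSpace ℝ (Fin n)) (hq : Differentiable ℝ q)
    (hg : Integrable (fun t => ‖q t‖ ^ 2 + ‖deriv q t‖ ^ 2)) (t : ℝ) :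
    ‖q t‖ ^ 2 ≤ ∫ t : ℝ, (‖q t‖ ^ 2 + ‖deriv q t‖ ^ 2) := by
  set g : ℝ → ℝ := fun t => ‖q t‖ ^ 2 + ‖deriv q t‖ ^ 2 with hgdef
  have hg0 : ∀ u, 0 ≤ g u := fun u => by positivity
  set F : ℝ → ℝ := fun u => inner ℝ (q u) (q u) with hF
  set F' : ℝ → ℝ := fun u => inner ℝ (q u) (deriv q u) + inner ℝ (deriv q u) (q u) with hF'
  have hFnorm : ∀ u, F u = ‖q u‖ ^ 2 := fun u => real_inner_self_eq_norm_sq (q u)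
  have hderiv : ∀ u : ℝ, HasDerivAt F (F' u) u := fun u =>
    HasDerivAt.inner ℝ (hq u).hasDerivAt (hq u).hasDerivAt
  have hF'bound : ∀ u, |F' u| ≤ g u := by
    intro u
    have h1 := abs_real_inner_le_norm (q u) (deriv q u)
    have h2 := abs_real_inner_le_norm (deriv q u) (q u)
    have h3 : 2 * (‖q u‖ * ‖deriv q u‖) ≤ ‖q u‖^2 + ‖deriv q u‖^2 := by
      nlinarith [sq_nonneg (‖q u‖ - ‖deriv q u‖)]
    calc |F' u| ≤ |inner ℝ (q u) (deriv q u)| + |(inner ℝ (deriv q u) (q u) : ℝ)| := abs_add_le _ _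
      _ ≤ ‖q u‖ * ‖deriv q u‖ + ‖deriv q u‖ * ‖q u‖ := add_le_add h1 h2
      _ ≤ ‖q u‖ ^ 2 + ‖deriv q u‖ ^ 2 := by nlinarith
      _ = g u := rfl
  have hqm : Measurable q := hq.continuous.measurable
  have hdm : Measurable (deriv q) := measurable_deriv q
  have hF'int : Integrable F' := by
    refine hg.mono' ?_ ?_
    · exact ((hqm.inner hdm).add (hdm.inner hqm)).aestronglyMeasurable
    · refine Filter.Eventually.of_forall fun u => ?_
      simpa [Real.norm_eq_abs, abs_of_nonneg (hg0 u)] using hF'bound u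
  have hFint : Integrable F := by
    refine hg.mono' ((hqm.inner hqm).aestronglyMeasurable) (Filter.Eventually.of_forall fun u => ?_)
    rw [Real.norm_eq_abs, hFnorm u, abs_of_nonneg (sq_nonneg _)]
    exact le_add_of_nonneg_right (sq_nonneg _)
  have key : ∀ s, s ≤ t → F t ≤ F s + ∫ u : ℝ, g u := by
    intro s hst
    have hftc : ∫ u in s..t, F' u = F t - F s :=
      intervalIntegral.integral_eq_sub_of_hasDerivAt (fun u _ => hderiv u)
        (hF'int.intervalIntegrable)
    have hmono : ∫ u in s..t, F' u ≤ ∫ u in s..t, g u := by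
      apply intervalIntegral.integral_mono_on hst (hF'int.intervalIntegrable)
        (hg.intervalIntegrable)
      intro u _
      exact (le_abs_self _).trans (hF'bound u)
    have hle : ∫ u in s..t, g u ≤ ∫ u : ℝ, g u := by
      rw [intervalIntegral.integral_of_le hst]
      exact setIntegral_le_integral hg (Filter.Eventually.of_forall hg0)
    linarith
  have hsmall : ∀ ε : ℝ, 0 < ε → ∃ s ≤ t, F s ≤ ε := by
    intro ε hε
    by_contra hcon
    push_neg at hcon
    have hsub : Set.Iic t ⊆ {u : ℝ | ε ≤ F u} := fun u hu => (hcon u hu).le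
    have h1 : (volume : Measure ℝ) {u : ℝ | ε ≤ F u} < ⊤ := hFint.measure_ge_lt_top hε
    have h2 : (volume : Measure ℝ) (Set.Iic t) = ⊤ := Real.volume_Iic
    exact absurd (lt_of_le_of_lt (h2 ▸ measure_mono hsub) h1) (lt_irrefl _)
  have : F t ≤ ∫ u : ℝ, g u := by
    refine le_of_forall_pos_le_add fun ε hε => ?_
    obtain ⟨s, hst, hFs⟩ := hsmall ε hε
    have := key s hst
    linarith
  rw [← hFnorm t]; exact this

/-- `I` is bounded from below on `H¹`:
`I(q) ≥ φ(y)` where `φ(x) = ½x² − Cx^α`, `C = π^{α/2}∫a`, `y = (Cα)^{1/(2−α)}`,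
and `φ(y) = min_{x ≥ 0} φ(x)`. -/
theorem stmt_19 (n : ℕ) (a : ℝ → ℝ) (α : ℝ)
    (ha_cont : Continuous a) (ha_nonneg : ∀ t, 0 ≤ a t) (ha_int : Integrable a)
    (hα1 : 1 < α) (hα2 : α < 2) :
    (∀ q : ℝ → EuclideanSpace ℝ (Fin n), Differentiable ℝ q →
      Integrable (fun t => ‖q t‖ ^ 2 + ‖deriv q t‖ ^ 2) →
      Integrable (fun t => a t * ‖q t‖ ^ α) →
      ((1:ℝ)/2) * (∫ t : ℝ, (‖q t‖ ^ 2 + ‖deriv q t‖ ^ 2))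
          - (∫ t : ℝ, a t * ‖q t‖ ^ α)
        ≥ ((1:ℝ)/2) * ((π ^ (α/2) * (∫ t : ℝ, a t) * α) ^ ((1:ℝ)/(2 - α))) ^ 2
          - (π ^ (α/2) * (∫ t : ℝ, a t)) *
            ((π ^ (α/2) * (∫ t : ℝ, a t) * α) ^ ((1:ℝ)/(2 - α))) ^ α) ∧
    (∀ x : ℝ, 0 ≤ x →
      ((1:ℝ)/2) * ((π ^ (α/2) * (∫ t : ℝ, a t) * α) ^ ((1:ℝ)/(2 - α))) ^ 2
          - (π ^ (α/2) * (∫ t : ℝ, a t)) *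
            ((π ^ (α/2) * (∫ t : ℝ, a t) * α) ^ ((1:ℝ)/(2 - α))) ^ α
        ≤ ((1:ℝ)/2) * x ^ 2 - (π ^ (α/2) * (∫ t : ℝ, a t)) * x ^ α) := by
  have hα0 : (0:ℝ) < α := by linarith
  have hia : 0 ≤ ∫ t : ℝ, a t := integral_nonneg ha_nonneg
  have hC : 0 ≤ π ^ (α/2) * (∫ t : ℝ, a t) :=
    mul_nonneg (rpow_nonneg pi_nonneg _) hia
  constructor
  · intro q hq hgint haint
    set N : ℝ := ∫ t : ℝ, (‖q t‖ ^ 2 + ‖deriv q t‖ ^ 2) with hN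
    have hN0 : 0 ≤ N := integral_nonneg fun t => by positivity
    set M : ℝ := Real.sqrt N with hM
    have hM0 : 0 ≤ M := Real.sqrt_nonneg _
    have hM2 : M ^ 2 = N := Real.sq_sqrt hN0
    have hqM : ∀ t, ‖q t‖ ≤ M := by
      intro t
      rw [hM]
      exact (Real.le_sqrt (norm_nonneg _) hN0).mpr (sup_sq_le q hq hgint t)
    have step1 : (∫ t : ℝ, a t * ‖q t‖ ^ α) ≤ (∫ t : ℝ, a t) * M ^ α := by
      calc (∫ t : ℝ, a t * ‖q t‖ ^ α) ≤ ∫ t : ℝ, a t * M ^ α := by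
            refine integral_mono haint (ha_int.mul_const _) fun t => ?_
            exact mul_le_mul_of_nonneg_left
              (Real.rpow_le_rpow (norm_nonneg _) (hqM t) hα0.le) (ha_nonneg t)
        _ = (∫ t : ℝ, a t) * M ^ α := integral_mul_const _ _
    have hπ : (1:ℝ) ≤ π ^ (α/2) :=
      Real.one_le_rpow (by linarith [Real.pi_gt_three]) (by linarith)
    have step2 : (∫ t : ℝ, a t) * M ^ α ≤ (π ^ (α/2) * (∫ t : ℝ, a t)) * M ^ α := by
      have : (∫ t : ℝ, a t) ≤ π ^ (α/2) * (∫ t : ℝ, a t) := le_mul_of_one_le_left hia hπ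
      exact mul_le_mul_of_nonneg_right this (rpow_nonneg hM0 _)
    have hmin := phi_min hC hα1 hα2 M hM0
    rw [hM2] at hmin
    have : (1:ℝ)/2 * N - (π ^ (α/2) * (∫ t : ℝ, a t)) * M ^ α
        ≤ (1:ℝ)/2 * N - (∫ t : ℝ, a t * ‖q t‖ ^ α) := by linarith
    linarith
  · intro x hx
    exact phi_min hC hα1 hα2 x hx
end
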